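/- arXiv:2202.08980 — 4 statements merged into one kernel-verified Lean document; each statement's English description precedes it below -/
import Mathlib

section
/- Assume 0 < q < 1, α > 0, 0 < p ≤ 2, with the additional hypothesis a ≥ q(1−q) in case p = 2, and assume 0 < q < p/2 ≤ 1. Then g(x(t)) − g* = O(1/t^{2q}) as t → ∞ and ‖ẋ(t)‖ = O(1/t^{q}) as t → ∞. -/
set_option maxHeartbeats 1600000

open Filter Topology Set MeasureTheory RealInnerProductSpace

section LyapAux
variable {H : Type*} [NormedAddCommGroup H] [InnerProductSpace ℝ H] [CompleteSpace H]


theorem grad_convex_ineq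
    {H : Type*} [NormedAddCommGroup H] [InnerProductSpace ℝ H] [CompleteSpace H]
    (g : H → ℝ) (g' : H → H)
    (hg_convex : ConvexOn ℝ Set.univ g)
    (hg_grad : ∀ y : H, HasGradientAt g (g' y) y)
    (y z : H) : ⟪g' y, z - y⟫ ≤ g z - g y := by
  set d := z - y with hd
  have hc : HasDerivAt (fun s : ℝ => y + s • d) d 0 := by
    simpa using ((hasDerivAt_id (0:ℝ)).smul_const d).const_add y
  have hgf : HasFDerivAt g ((InnerProductSpace.toDual ℝ H) (g' y)) (y + (0:ℝ) • d) := by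
    simpa using (hg_grad y).hasFDerivAt
  have hψ : HasDerivAt (fun s : ℝ => g (y + s • d)) ⟪g' y, d⟫ 0 := by
    have := hgf.comp_hasDerivAt (0:ℝ) hc
    exact this
  have hslope : Tendsto (slope (fun s : ℝ => g (y + s • d)) 0) (𝓝[>] 0) (𝓝 ⟪g' y, d⟫) :=
    (hasDerivAt_iff_tendsto_slope.1 hψ).mono_left
      (nhdsWithin_mono _ (fun s hs => ne_of_gt hs))
  refine le_of_tendsto hslope ?_
  filter_upwards [Ioc_mem_nhdsGT_of_mem (Set.mem_Ico.2 ⟨le_refl (0:ℝ), one_pos⟩)] with s hs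
  obtain ⟨hs0, hs1⟩ := hs
  have hcomb : y + s • d = (1 - s) • y + s • z := by
    rw [hd]; module
  have hconv : g (y + s • d) ≤ (1 - s) * g y + s * g z := by
    rw [hcomb]
    simpa using hg_convex.2 (Set.mem_univ y) (Set.mem_univ z)
      (by linarith : (0:ℝ) ≤ 1 - s) hs0.le (by ring)
  rw [slope_def_field]
  simp only [zero_smul, add_zero, sub_zero]
  rw [div_le_iff₀ hs0]
  nlinarith
variable {H : Type*} [NormedAddCommGroup H] [InnerProductSpace ℝ H] [CompleteSpace H]

private lemma hasDerivAt_rpow' {t e e' : ℝ} (ht : t ≠ 0) (h : e - 1 = e') :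
    HasDerivAt (fun s : ℝ => s ^ e) (e * t ^ e') t := by
  rw [← h]; exact Real.hasDerivAt_rpow_const (Or.inl ht)

noncomputable def lyapF (g : H → ℝ) (x x' : ℝ → H) (xstar : H) (q a p α : ℝ) (s : ℝ) : ℝ :=
  s^(2*q) * (g (x s) - g xstar)
  + a/2 * (s^(2*q-p) * (⟪x s, x s⟫ - ⟪xstar, xstar⟫))
  + 1/2 * (s^(2*q) * ⟪x' s, x' s⟫)
  + 2*q * (s^(2*q-1) * ⟪x s - xstar, x' s⟫)
  + (q*α*s^(q-1) - q*(2*q-1)*s^(2*q-2)) * ⟪x s - xstar, x s - xstar⟫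

noncomputable def lyapD (g : H → ℝ) (g' : H → H) (x x' x'' : ℝ → H) (xstar : H) (q a p α : ℝ) (s : ℝ) : ℝ :=
  (2*q * s^(2*q-1) * (g (x s) - g xstar) + s^(2*q) * ⟪g' (x s), x' s⟫)
  + a/2 * ((2*q-p) * s^(2*q-p-1) * (⟪x s, x s⟫ - ⟪xstar, xstar⟫) + s^(2*q-p) * (⟪x s, x' s⟫ + ⟪x' s, x s⟫))
  + 1/2 * (2*q * s^(2*q-1) * ⟪x' s, x' s⟫ + s^(2*q) * (⟪x' s, x'' s⟫ + ⟪x'' s, x' s⟫))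
  + 2*q * ((2*q-1) * s^(2*q-2) * ⟪x s - xstar, x' s⟫ + s^(2*q-1) * (⟪x s - xstar, x'' s⟫ + ⟪x' s, x' s⟫))
  + ((q*α*((q-1) * s^(q-2)) - q*(2*q-1)*((2*q-2) * s^(2*q-3))) * ⟪x s - xstar, x s - xstar⟫
     + (q*α*s^(q-1) - q*(2*q-1)*s^(2*q-2)) * (⟪x s - xstar, x' s⟫ + ⟪x' s, x s - xstar⟫))

lemma lyapF_hasDerivAt (g : H → ℝ) (g' : H → H) (x x' x'' : ℝ → H) (xstar : H)
    (q a p α t : ℝ) (ht : 0 < t)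
    (hxd : HasDerivAt x (x' t) t) (hxd' : HasDerivAt x' (x'' t) t)
    (hgrad : HasGradientAt g (g' (x t)) (x t)) :
    HasDerivAt (lyapF g x x' xstar q a p α) (lyapD g g' x x' x'' xstar q a p α t) t := by
  have htne : t ≠ 0 := ne_of_gt ht
  have hgx : HasDerivAt (fun s => g (x s)) ⟪g' (x t), x' t⟫ t := by
    have hgf : HasFDerivAt g ((InnerProductSpace.toDual ℝ H) (g' (x t))) (x t) := hgrad
    exact hgf.comp_hasDerivAt t hxd
  have husub : HasDerivAt (fun s => x s - xstar) (x' t) t := hxd.sub_const xstar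
  have f1 : HasDerivAt (fun s : ℝ => s^(2*q) * (g (x s) - g xstar))
      (2*q * t^(2*q-1) * (g (x t) - g xstar) + t^(2*q) * ⟪g' (x t), x' t⟫) t :=
    (Real.hasDerivAt_rpow_const (Or.inl htne)).mul (hgx.sub_const (g xstar))
  have f2 : HasDerivAt (fun s : ℝ => a/2 * (s^(2*q-p) * (⟪x s, x s⟫ - ⟪xstar, xstar⟫)))
      (a/2 * ((2*q-p) * t^(2*q-p-1) * (⟪x t, x t⟫ - ⟪xstar, xstar⟫)
        + t^(2*q-p) * (⟪x t, x' t⟫ + ⟪x' t, x t⟫))) t :=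
    (((Real.hasDerivAt_rpow_const (Or.inl htne)).mul
      ((hxd.inner ℝ hxd).sub_const _)).const_mul _)
  have f3 : HasDerivAt (fun s : ℝ => 1/2 * (s^(2*q) * ⟪x' s, x' s⟫))
      (1/2 * (2*q * t^(2*q-1) * ⟪x' t, x' t⟫
        + t^(2*q) * (⟪x' t, x'' t⟫ + ⟪x'' t, x' t⟫))) t :=
    (((Real.hasDerivAt_rpow_const (Or.inl htne)).mul (hxd'.inner ℝ hxd')).const_mul _)
  have f4 : HasDerivAt (fun s : ℝ => 2*q * (s^(2*q-1) * ⟪x s - xstar, x' s⟫))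
      (2*q * ((2*q-1) * t^(2*q-2) * ⟪x t - xstar, x' t⟫
        + t^(2*q-1) * (⟪x t - xstar, x'' t⟫ + ⟪x' t, x' t⟫))) t :=
    (((hasDerivAt_rpow' htne (by ring)).mul (husub.inner ℝ hxd')).const_mul _)
  have f5c : HasDerivAt (fun s : ℝ => q*α*s^(q-1) - q*(2*q-1)*s^(2*q-2))
      (q*α*((q-1) * t^(q-2)) - q*(2*q-1)*((2*q-2) * t^(2*q-3))) t :=
    ((hasDerivAt_rpow' htne (by ring)).const_mul _).sub
      ((hasDerivAt_rpow' htne (by ring)).const_mul _)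
  have f5 : HasDerivAt (fun s : ℝ => (q*α*s^(q-1) - q*(2*q-1)*s^(2*q-2)) * ⟪x s - xstar, x s - xstar⟫)
      ((q*α*((q-1) * t^(q-2)) - q*(2*q-1)*((2*q-2) * t^(2*q-3))) * ⟪x t - xstar, x t - xstar⟫
       + (q*α*t^(q-1) - q*(2*q-1)*t^(2*q-2)) * (⟪x t - xstar, x' t⟫ + ⟪x' t, x t - xstar⟫)) t :=
    f5c.mul (husub.inner ℝ husub)
  exact ((((f1.add f2).add f3).add f4).add f5)

lemma lyapD_le (g : H → ℝ) (g' : H → H) (x x' x'' : ℝ → H) (xstar : H)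
    (q a p α t : ℝ) (htpos : 0 < t)
    (hq0 : 0 < q) (hq1 : q < 1) (ha0 : 0 < a) (hp0 : 0 < p) (hα : 0 < α)
    (hODEt : x'' t + (α / t ^ q) • x' t + g' (x t) + (a / t ^ p) • x t = 0)
    (hIg : g (x t) - g xstar ≤ ⟪g' (x t), x t - xstar⟫)
    (hh1 : 0 ≤ g (x t) - g xstar)
    (hc1 : 3*q*t^(q-1) ≤ α)
    (hc2 : (2*q-1)*(2-2*q)*t^(q-1) ≤ α*(1-q)) :
    lyapD g g' x x' x'' xstar q a p α t ≤ a*p/2 * ⟪xstar, xstar⟫ * t^(2*q-p-1) := by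
  have htne : t ≠ 0 := ne_of_gt htpos
  have E1 : ⟪x' t, x'' t⟫ = -((α/t^q) * ⟪x' t, x' t⟫) - ⟪g' (x t), x' t⟫
      - (a/t^p) * ⟪x t, x' t⟫ := by
    have h := congrArg (fun v : H => ⟪v, x' t⟫) hODEt
    simp only [inner_add_left, real_inner_smul_left, inner_zero_left,
      real_inner_comm (x' t) (x'' t)] at h ⊢
    linarith
  have E2 : ⟪x t - xstar, x'' t⟫ = -((α/t^q) * ⟪x t - xstar, x' t⟫)
      - ⟪g' (x t), x t - xstar⟫
      - (a/t^p) * ((⟪x t, x t⟫ - ⟪xstar, xstar⟫ + ⟪x t - xstar, x t - xstar⟫)/2) := by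
    have h := congrArg (fun v : H => ⟪v, x t - xstar⟫) hODEt
    simp only [inner_add_left, real_inner_smul_left, inner_zero_left, inner_sub_left,
      inner_sub_right, real_inner_comm xstar (x t), real_inner_comm (x' t) (x t),
      real_inner_comm (x' t) xstar, real_inner_comm (x t - xstar) (x'' t),
      real_inner_comm (x t) (x'' t), real_inner_comm xstar (x'' t)] at h ⊢
    linarith
  -- rpow identities
  have hqq : t ^ q = t^(q-1) * t := by
    nth_rewrite 1 [show q = (q-1)+1 by ring]
    rw [Real.rpow_add htpos, Real.rpow_one]
  have h2q : t ^ (2*q) = t^(q-1) * t^(q-1) * t * t := by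
    rw [show (2*q:ℝ) = ((q-1)+(q-1))+(1+1) by ring, Real.rpow_add htpos,
      Real.rpow_add htpos, Real.rpow_add htpos, Real.rpow_one]; ring
  have h2q1 : t ^ (2*q-1) = t^(q-1) * t^(q-1) * t := by
    rw [show (2*q-1:ℝ) = ((q-1)+(q-1))+1 by ring, Real.rpow_add htpos,
      Real.rpow_add htpos, Real.rpow_one]
  have h2q2 : t ^ (2*q-2) = t^(q-1) * t^(q-1) := by
    rw [show (2*q-2:ℝ) = (q-1)+(q-1) by ring, Real.rpow_add htpos]
  have h2q3 : t ^ (2*q-3) = t^(q-1) * t^(q-1) / t := by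
    rw [show (2*q-3:ℝ) = ((q-1)+(q-1))-1 by ring, Real.rpow_sub htpos,
      Real.rpow_add htpos, Real.rpow_one]
  have hqm2 : t ^ (q-2) = t^(q-1) / t := by
    rw [show (q-2:ℝ) = (q-1)-1 by ring, Real.rpow_sub htpos, Real.rpow_one]
  have h2qp : t ^ (2*q-p) = t^(q-1) * t^(q-1) * t * t / t^p := by
    rw [show (2*q-p:ℝ) = (((q-1)+(q-1))+(1+1))-p by ring, Real.rpow_sub htpos,
      Real.rpow_add htpos, Real.rpow_add htpos, Real.rpow_add htpos, Real.rpow_one]; ring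
  have h2qp1 : t ^ (2*q-p-1) = t^(q-1) * t^(q-1) * t / t^p := by
    rw [show (2*q-p-1:ℝ) = (((q-1)+(q-1))+1)-p by ring, Real.rpow_sub htpos,
      Real.rpow_add htpos, Real.rpow_add htpos, Real.rpow_one]
  have hepos : 0 < t^(q-1) := Real.rpow_pos_of_pos htpos _
  have hfpos : 0 < t^p := Real.rpow_pos_of_pos htpos _
  have hene : t^(q-1) ≠ 0 := ne_of_gt hepos
  have hfne : t^p ≠ 0 := ne_of_gt hfpos
  calc lyapD g g' x x' x'' xstar q a p α t
      = a*p/2 * ⟪xstar, xstar⟫ * (t^(q-1) * t^(q-1) * t / t^p)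
        + 2*q*(t^(q-1)*t^(q-1)*t)*((g (x t) - g xstar) - ⟪g' (x t), x t - xstar⟫)
        + (3*q*t^(q-1) - α)*((t^(q-1)*t)*⟪x' t, x' t⟫)
        - a*p/2*((t^(q-1)*t^(q-1)*t/t^p)*⟪x t, x t⟫)
        + (q*α*(q-1)*(t^(q-1)/t) + q*(2*q-1)*(2-2*q)*(t^(q-1)*t^(q-1)/t)
            - q*a*(t^(q-1)*t^(q-1)*t/t^p))*⟪x t - xstar, x t - xstar⟫ := by
        unfold lyapD
        rw [real_inner_comm (x' t) (x'' t), real_inner_comm (x t) (x' t),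
          real_inner_comm (x t - xstar) (x' t)]
        rw [E1, E2, h2q, h2q1, h2q2, h2q3, hqm2, h2qp, h2qp1, hqq]
        field_simp
        ring
    _ ≤ a*p/2 * ⟪xstar, xstar⟫ * t^(2*q-p-1) := by
        rw [h2qp1]
        have hB : (0:ℝ) ≤ ⟪x' t, x' t⟫ := real_inner_self_nonneg
        have hA : (0:ℝ) ≤ ⟪x t, x t⟫ := real_inner_self_nonneg
        have hU : (0:ℝ) ≤ ⟪x t - xstar, x t - xstar⟫ := real_inner_self_nonneg
        have hT1 : 2*q*(t^(q-1)*t^(q-1)*t)*((g (x t) - g xstar) - ⟪g' (x t), x t - xstar⟫) ≤ 0 := by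
          apply mul_nonpos_of_nonneg_of_nonpos
          · positivity
          · linarith
        have hT2 : (3*q*t^(q-1) - α)*((t^(q-1)*t)*⟪x' t, x' t⟫) ≤ 0 := by
          apply mul_nonpos_of_nonpos_of_nonneg
          · linarith
          · positivity
        have hT3 : 0 ≤ a*p/2*((t^(q-1)*t^(q-1)*t/t^p)*⟪x t, x t⟫) := by positivity
        have hT5 : (q*α*(q-1)*(t^(q-1)/t) + q*(2*q-1)*(2-2*q)*(t^(q-1)*t^(q-1)/t)
            - q*a*(t^(q-1)*t^(q-1)*t/t^p))*⟪x t - xstar, x t - xstar⟫ ≤ 0 := by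
          apply mul_nonpos_of_nonpos_of_nonneg _ hU
          have k1 : q*(2*q-1)*(2-2*q)*(t^(q-1)*t^(q-1)/t) ≤ q*α*(1-q)*(t^(q-1)/t) := by
            have := mul_le_mul_of_nonneg_right hc2 (le_of_lt (by positivity : 0 < q*(t^(q-1)/t)))
            calc q*(2*q-1)*(2-2*q)*(t^(q-1)*t^(q-1)/t)
                = (2*q-1)*(2-2*q)*t^(q-1) * (q*(t^(q-1)/t)) := by ring
              _ ≤ α*(1-q) * (q*(t^(q-1)/t)) := this
              _ = q*α*(1-q)*(t^(q-1)/t) := by ring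
          have k2 : 0 ≤ q*a*(t^(q-1)*t^(q-1)*t/t^p) := by positivity
          linarith [k1, k2]
        linarith

end LyapAux

theorem stmt0
    {H : Type*} [NormedAddCommGroup H] [InnerProductSpace ℝ H] [CompleteSpace H]
    (g : H → ℝ) (g' : H → H)
    (hg_convex : ConvexOn ℝ Set.univ g)
    (hg_grad : ∀ y : H, HasGradientAt g (g' y) y)
    (hg_lip : ∀ s : Set H, Bornology.IsBounded s → ∃ K : NNReal, LipschitzOnWith K g' s)
    (t₀ α q a p : ℝ) (ht₀ : 0 < t₀) (hα : 0 < α) (hq0 : 0 < q) (ha0 : 0 < a) (hp0 : 0 < p)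
    (x x' x'' : ℝ → H)
    (hx : ∀ t ≥ t₀, HasDerivAt x (x' t) t)
    (hx' : ∀ t ≥ t₀, HasDerivAt x' (x'' t) t)
    (hx''c : ContinuousOn x'' (Set.Ici t₀))
    (hODE : ∀ t ≥ t₀, x'' t + (α / t ^ q) • x' t + g' (x t) + (a / t ^ p) • x t = 0)
    (xstar : H) (hxstar : ∀ y : H, g xstar ≤ g y)
    (hq1 : q < 1) (hp2 : p ≤ 2) (hpa : p = 2 → a ≥ q * (1 - q))
    (hqp : q < p / 2) (hp21 : p / 2 ≤ 1) :
    (∃ C > (0:ℝ), ∃ t₁ ≥ t₀, ∀ t ≥ t₁, |g (x t) - g xstar| ≤ C / t ^ (2 * q)) ∧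
    (∃ C > (0:ℝ), ∃ t₁ ≥ t₀, ∀ t ≥ t₁, |‖x' t‖| ≤ C / t ^ (q)) := by
  set Nc : ℝ := ⟪xstar, xstar⟫ with hNcdef
  have hNc : 0 ≤ Nc := real_inner_self_nonneg
  have hIg : ∀ t : ℝ, g (x t) - g xstar ≤ ⟪g' (x t), x t - xstar⟫ := by
    intro t
    have h := grad_convex_ineq g g' hg_convex hg_grad (x t) xstar
    have h2 : ⟪g' (x t), x t - xstar⟫ = -⟪g' (x t), xstar - x t⟫ := by
      simp [inner_sub_right]
    rw [h2]; linarith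
  have hh1 : ∀ t : ℝ, 0 ≤ g (x t) - g xstar := fun t => sub_nonneg.2 (hxstar (x t))
  -- choose the threshold T₁
  have hlim : Tendsto (fun t : ℝ => t ^ (q - 1)) atTop (𝓝 0) := by
    have h := tendsto_rpow_neg_atTop (show (0:ℝ) < 1 - q by linarith)
    simpa [neg_sub] using h
  have hδpos : (0:ℝ) < min (α/(3*q)) (min (α*(1-q)/2) (α/(6*q))) := by
    have h1 : (0:ℝ) < α/(3*q) := by positivity
    have h2 : (0:ℝ) < α*(1-q)/2 := by
      have : (0:ℝ) < 1 - q := by linarith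
      positivity
    have h3 : (0:ℝ) < α/(6*q) := by positivity
    exact lt_min h1 (lt_min h2 h3)
  set δ : ℝ := min (α/(3*q)) (min (α*(1-q)/2) (α/(6*q))) with hδdef
  have hev : ∀ᶠ t in atTop, t ^ (q-1) ≤ δ := hlim.eventually (eventually_le_nhds hδpos)
  obtain ⟨T₀, hT₀⟩ := eventually_atTop.1 hev
  set T₁ : ℝ := max T₀ (max t₀ 1) with hT₁def
  have hT₁t₀ : t₀ ≤ T₁ := le_trans (le_max_left _ _) (le_max_right _ _)
  have hT₁1 : (1:ℝ) ≤ T₁ := le_trans (le_max_right _ _) (le_max_right _ _)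
  -- basic facts for t ≥ T₁
  have hbasic : ∀ t : ℝ, T₁ ≤ t → (0 < t ∧ t₀ ≤ t ∧ 1 ≤ t ∧ t ^ (q-1) ≤ δ ∧ 0 < t ^ (q-1)) := by
    intro t ht
    have h1 : (1:ℝ) ≤ t := le_trans hT₁1 ht
    have hpos : 0 < t := lt_of_lt_of_le one_pos h1
    refine ⟨hpos, le_trans hT₁t₀ ht, h1, hT₀ t (le_trans (le_max_left _ _) ht), Real.rpow_pos_of_pos hpos _⟩
  have hδ1 : δ ≤ α/(3*q) := min_le_left _ _
  have hδ2 : δ ≤ α*(1-q)/2 := le_trans (min_le_right _ _) (min_le_left _ _)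
  have hδ3 : δ ≤ α/(6*q) := le_trans (min_le_right _ _) (min_le_right _ _)
  -- the three eventual coefficient conditions
  have hc1 : ∀ t : ℝ, T₁ ≤ t → 3*q*t^(q-1) ≤ α := by
    intro t ht
    obtain ⟨hpos, -, -, hvδ, hv0⟩ := hbasic t ht
    have h2 : δ*(3*q) ≤ α := (le_div_iff₀ (by positivity)).1 hδ1
    linarith [mul_le_mul_of_nonneg_left hvδ (by positivity : (0:ℝ) ≤ 3*q)]
  have hc2 : ∀ t : ℝ, T₁ ≤ t → (2*q-1)*(2-2*q)*t^(q-1) ≤ α*(1-q) := by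
    intro t ht
    obtain ⟨hpos, -, -, hvδ, hv0⟩ := hbasic t ht
    have hc' : (2*q-1)*(2-2*q) ≤ 1/4 := by nlinarith [sq_nonneg (4*q-3)]
    have h1 : (2*q-1)*(2-2*q)*(t^(q-1)) ≤ (1/4)*(t^(q-1)) :=
      mul_le_mul_of_nonneg_right hc' hv0.le
    have h4 : 0 ≤ α*(1-q) := mul_nonneg hα.le (by linarith)
    linarith [h1, hvδ, hδ2, h4]
  have hc3 : ∀ t : ℝ, T₁ ≤ t → (6*q-1)*t^(q-1) ≤ α := by
    intro t ht
    obtain ⟨hpos, -, -, hvδ, hv0⟩ := hbasic t ht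
    have h2 : δ*(6*q) ≤ α := (le_div_iff₀ (by positivity)).1 hδ3
    linarith [mul_le_mul_of_nonneg_left hvδ (by positivity : (0:ℝ) ≤ 6*q), hv0]
  -- derivative of the Lyapunov function
  have hF : ∀ t : ℝ, T₁ ≤ t →
      HasDerivAt (lyapF g x x' xstar q a p α) (lyapD g g' x x' x'' xstar q a p α t) t := by
    intro t ht
    obtain ⟨hpos, ht0, -, -, -⟩ := hbasic t ht
    exact lyapF_hasDerivAt g g' x x' x'' xstar q a p α t hpos (hx t ht0) (hx' t ht0)
      (hg_grad (x t))
  have hp2q : 0 < p - 2*q := by linarith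
  set c₀ : ℝ := a*p*Nc/(2*(p-2*q)) with hc₀def
  have hc₀ : 0 ≤ c₀ := by positivity
  set G : ℝ → ℝ := fun s => lyapF g x x' xstar q a p α s + c₀ * s^(2*q-p) with hGdef
  have hG : ∀ t : ℝ, T₁ ≤ t →
      HasDerivAt G (lyapD g g' x x' x'' xstar q a p α t + c₀ * ((2*q-p) * t^(2*q-p-1))) t := by
    intro t ht
    obtain ⟨hpos, -, -, -, -⟩ := hbasic t ht
    exact (hF t ht).add ((Real.hasDerivAt_rpow_const (Or.inl (ne_of_gt hpos))).const_mul c₀)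
  have hGd : ∀ t : ℝ, T₁ ≤ t → lyapD g g' x x' x'' xstar q a p α t
      + c₀ * ((2*q-p) * t^(2*q-p-1)) ≤ 0 := by
    intro t ht
    obtain ⟨hpos, ht0, -, -, -⟩ := hbasic t ht
    have hb := lyapD_le g g' x x' x'' xstar q a p α t hpos hq0 hq1 ha0 hp0 hα
      (hODE t ht0) (hIg t) (hh1 t) (hc1 t ht) (hc2 t ht)
    have hcc : c₀ * (2*q-p) = -(a*p/2*Nc) := by
      rw [hc₀def]; field_simp; ring
    have : c₀ * ((2*q-p) * t^(2*q-p-1)) = -(a*p/2*Nc*t^(2*q-p-1)) := by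
      rw [← mul_assoc, hcc]; ring
    rw [this]
    have : a*p/2 * ⟪xstar, xstar⟫ * t^(2*q-p-1) = a*p/2*Nc*t^(2*q-p-1) := by rw [hNcdef]
    linarith [hb.trans_eq this]
  -- G is antitone on [T₁, ∞)
  have hanti : AntitoneOn G (Ici T₁) := by
    apply antitoneOn_of_deriv_nonpos (convex_Ici T₁)
    · intro t ht
      exact (hG t ht).continuousAt.continuousWithinAt
    · intro t ht
      rw [interior_Ici] at ht
      exact ((hG t (le_of_lt ht)).differentiableAt).differentiableWithinAt
    · intro t ht
      rw [interior_Ici] at ht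
      rw [(hG t (le_of_lt ht)).deriv]
      exact hGd t (le_of_lt ht)
  have hFle : ∀ t : ℝ, T₁ ≤ t → lyapF g x x' xstar q a p α t ≤ G T₁ := by
    intro t ht
    obtain ⟨hpos, -, -, -, -⟩ := hbasic t ht
    have h1 : G t ≤ G T₁ := hanti (self_mem_Ici) (mem_Ici.2 ht) ht
    have h2 : 0 ≤ c₀ * t^(2*q-p) := mul_nonneg hc₀ (Real.rpow_pos_of_pos hpos _).le
    have : lyapF g x x' xstar q a p α t + c₀ * t^(2*q-p) = G t := rfl
    linarith [this ▸ (by linarith [h1, h2] : lyapF g x x' xstar q a p α t + c₀ * t^(2*q-p) ≤ G T₁)]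
  -- lower bound: extract the two quantities
  have key : ∀ t : ℝ, T₁ ≤ t →
      t^(2*q) * (g (x t) - g xstar) + t^(2*q)/4 * ‖x' t‖^2 ≤ G T₁ + a/2*Nc := by
    intro t ht
    obtain ⟨hpos, -, ht1, -, hv0⟩ := hbasic t ht
    have hFl := hFle t ht
    unfold lyapF at hFl
    have h2q : t ^ (2*q) = t^(q-1) * t^(q-1) * t * t := by
      rw [show (2*q:ℝ) = ((q-1)+(q-1))+(1+1) by ring, Real.rpow_add hpos,
        Real.rpow_add hpos, Real.rpow_add hpos, Real.rpow_one]; ring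
    have h2q1 : t ^ (2*q-1) = t^(q-1) * t^(q-1) * t := by
      rw [show (2*q-1:ℝ) = ((q-1)+(q-1))+1 by ring, Real.rpow_add hpos,
        Real.rpow_add hpos, Real.rpow_one]
    have h2q2 : t ^ (2*q-2) = t^(q-1) * t^(q-1) := by
      rw [show (2*q-2:ℝ) = (q-1)+(q-1) by ring, Real.rpow_add hpos]
    have hX2a : 0 ≤ t^(2*q-p) := (Real.rpow_pos_of_pos hpos _).le
    have hX2b : t^(2*q-p) ≤ 1 :=
      Real.rpow_le_one_of_one_le_of_nonpos ht1 (by linarith)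
    simp only [real_inner_self_eq_norm_sq] at hFl
    rw [h2q, h2q1, h2q2] at hFl
    rw [h2q]
    set e := t^(q-1) with hedef
    set nB := ‖x' t‖ with hnBdef
    set nU := ‖x t - xstar‖ with hnUdef
    set bb : ℝ := ⟪x t - xstar, x' t⟫ with hbbdef
    -- cross term control
    have hCS : -(nU*nB) ≤ bb := by
      have h := abs_real_inner_le_norm (x t - xstar) (x' t)
      rw [← hbbdef, ← hnUdef, ← hnBdef] at h
      cases abs_le.1 h with
      | intro h1 h2 => linarith
    have k2 : -( (e*e*t*t)*nB^2/4 + 4*q^2*(e*e)*nU^2) ≤ 2*q*((e*e*t)*bb) := by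
      have hcoef : (0:ℝ) ≤ 2*q*(e*e*t) := by positivity
      have hm : 0 ≤ 2*q*(e*e*t) * (bb + nU*nB) := mul_nonneg hcoef (by linarith)
      linarith [hm, sq_nonneg (e*t*nB - 4*q*e*nU)]
    have hNceq : Nc = ‖xstar‖^2 := real_inner_self_eq_norm_sq _
    have k1 : 0 ≤ a/2 * (t^(2*q-p) * (‖x t‖^2 - ‖xstar‖^2)) + a/2*‖xstar‖^2 := by
      have h0 : 0 ≤ ‖x t‖^2 := sq_nonneg _
      linarith [mul_nonneg ha0.le (mul_nonneg hX2a h0),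
        mul_nonneg ha0.le (mul_nonneg (by linarith : (0:ℝ) ≤ 1 - t^(2*q-p)) (sq_nonneg ‖xstar‖))]
    have k3 : 4*q^2*(e*e)*nU^2 ≤ (q*α*e - q*(2*q-1)*(e*e))*nU^2 := by
      have h6 : (6*q-1)*e ≤ α := hc3 t ht
      have hfac : 0 ≤ q*e*(α - (6*q-1)*e)*nU^2 := by
        apply mul_nonneg _ (sq_nonneg _)
        apply mul_nonneg (by positivity)
        linarith
      linarith [hfac]
    have hNceq2 : a/2*Nc = a/2*‖xstar‖^2 := by rw [hNceq]
    linarith [hFl, k1, k2, k3, hNceq2]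
  have hC₂ : 0 ≤ G T₁ + a/2*Nc := by
    have h := key T₁ le_rfl
    have hpos : (0:ℝ) < T₁ := lt_of_lt_of_le one_pos hT₁1
    have h1 : 0 ≤ T₁^(2*q) * (g (x T₁) - g xstar) :=
      mul_nonneg (Real.rpow_pos_of_pos hpos _).le (hh1 T₁)
    have h2 : 0 ≤ T₁^(2*q)/4 * ‖x' T₁‖^2 := by positivity
    linarith
  constructor
  · refine ⟨(G T₁ + a/2*Nc) + 1, by linarith, T₁, hT₁t₀, ?_⟩
    intro t ht
    obtain ⟨hpos, -, -, -, -⟩ := hbasic t ht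
    have h2qpos : (0:ℝ) < t^(2*q) := Real.rpow_pos_of_pos hpos _
    have h := key t ht
    have hB : 0 ≤ t^(2*q)/4 * ‖x' t‖^2 := by positivity
    have h1 : t^(2*q) * (g (x t) - g xstar) ≤ (G T₁ + a/2*Nc) + 1 := by linarith
    rw [abs_of_nonneg (hh1 t)]
    rw [le_div_iff₀ h2qpos]
    linarith [mul_comm (g (x t) - g xstar) (t^(2*q))]
  · refine ⟨Real.sqrt (4*(G T₁ + a/2*Nc)) + 1, by positivity, T₁, hT₁t₀, ?_⟩
    intro t ht
    obtain ⟨hpos, -, -, -, -⟩ := hbasic t ht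
    have hqpos : (0:ℝ) < t^q := Real.rpow_pos_of_pos hpos _
    have h := key t ht
    have hh : 0 ≤ t^(2*q) * (g (x t) - g xstar) :=
      mul_nonneg (Real.rpow_pos_of_pos hpos _).le (hh1 t)
    have hqq : t^(2*q) = t^q * t^q := by
      rw [show (2*q:ℝ) = q+q by ring, Real.rpow_add hpos]
    have hsq : (t^q * ‖x' t‖)^2 ≤ 4*(G T₁ + a/2*Nc) := by
      have : t^(2*q)/4 * ‖x' t‖^2 ≤ (G T₁ + a/2*Nc) := by linarith
      rw [hqq] at this
      linarith [this, sq_nonneg ‖x' t‖]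
    have hle : t^q * ‖x' t‖ ≤ Real.sqrt (4*(G T₁ + a/2*Nc)) := by
      rw [← Real.sqrt_sq (by positivity : (0:ℝ) ≤ t^q * ‖x' t‖)]
      exact Real.sqrt_le_sqrt hsq
    rw [abs_of_nonneg (norm_nonneg _)]
    rw [le_div_iff₀ hqpos]
    linarith [hle]
end

section
/- Assume 0 < q < 1, α > 0, 0 < p ≤ 2, with the additional hypothesis a ≥ q(1−q) in case p = 2, and assume p/2 ≤ q < 1. Then g(x(t)) − g* = O(1/t^{p}) as t → ∞ and ‖ẋ(t)‖ = O(1/t^{p/2}) as t → ∞. -/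
open Filter Topology Set MeasureTheory

local notation "⟪" a ", " b "⟫" => @inner ℝ _ _ a b

private lemma convex_grad_ineq {H : Type*} [NormedAddCommGroup H] [InnerProductSpace ℝ H]
    [CompleteSpace H] {g : H → ℝ} (hg : ConvexOn ℝ Set.univ g)
    {y Gy : H} (hGy : HasGradientAt g Gy y) (z : H) :
    ⟪Gy, z - y⟫ ≤ g z - g y := by
  set w := z - y with hw
  have haff : HasDerivAt (fun s : ℝ => y + s • w) w 0 := by
    simpa using ((hasDerivAt_id (0:ℝ)).smul_const w).const_add y
  have hphi : HasDerivAt (fun s : ℝ => g (y + s • w)) ⟪Gy, w⟫ 0 := by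
    have h0 : y + (0:ℝ) • w = y := by simp
    have := (h0 ▸ hGy.hasFDerivAt).comp_hasDerivAt 0 haff
    simp at this
    exact this
  have hslope : Tendsto (slope (fun s : ℝ => g (y + s • w)) 0) (𝓝[>] 0) (𝓝 ⟪Gy, w⟫) :=
    (hasDerivAt_iff_tendsto_slope.1 hphi).mono_left
      (nhdsWithin_mono 0 (fun s hs => ne_of_gt hs))
  have hbound : ∀ᶠ s in 𝓝[>] (0:ℝ), slope (fun s : ℝ => g (y + s • w)) 0 s ≤ g z - g y := by
    filter_upwards [Ioo_mem_nhdsGT_of_mem (by norm_num : (0:ℝ) ∈ Ico (0:ℝ) 1)] with s hs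
    have hs0 : 0 < s := hs.1
    have hs1 : s ≤ 1 := le_of_lt hs.2
    have hconv := hg.2 (Set.mem_univ y) (Set.mem_univ z) (by linarith : (0:ℝ) ≤ 1 - s)
      (le_of_lt hs0) (by ring)
    have hpt : y + s • w = (1 - s) • y + s • z := by
      rw [hw]; module
    have h1 : g (y + s • w) ≤ (1 - s) * g y + s * g z := by
      rw [hpt]; simpa [smul_eq_mul] using hconv
    have h2 : slope (fun s : ℝ => g (y + s • w)) 0 s
        = (g (y + s • w) - g y) / s := by
      simp [slope_def_field]
    rw [h2, div_le_iff₀ hs0]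
    nlinarith
  exact le_of_tendsto hslope hbound

private lemma rpow_shift {t : ℝ} (ht : 0 < t) (e : ℝ) : t ^ e = t * t ^ (e - 1) := by
  have h := Real.rpow_add ht 1 (e - 1)
  rw [Real.rpow_one] at h
  have h2 : t ^ e = t ^ (1 + (e - 1)) := by norm_num
  rw [h2, h]

private lemma rpow_shift' {t : ℝ} (ht : 0 < t) (e : ℝ) : t ^ (e - 1) = t ^ e * t⁻¹ := by
  rw [rpow_shift ht e]
  field_simp

set_option maxHeartbeats 1000000 in
theorem stmt1
    {H : Type*} [NormedAddCommGroup H] [InnerProductSpace ℝ H] [CompleteSpace H]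
    (g : H → ℝ) (g' : H → H)
    (hg_convex : ConvexOn ℝ Set.univ g)
    (hg_grad : ∀ y : H, HasGradientAt g (g' y) y)
    (hg_lip : ∀ s : Set H, Bornology.IsBounded s → ∃ K : NNReal, LipschitzOnWith K g' s)
    (t₀ α q a p : ℝ) (ht₀ : 0 < t₀) (hα : 0 < α) (hq0 : 0 < q) (ha0 : 0 < a) (hp0 : 0 < p)
    (x x' x'' : ℝ → H)
    (hx : ∀ t ≥ t₀, HasDerivAt x (x' t) t)
    (hx' : ∀ t ≥ t₀, HasDerivAt x' (x'' t) t)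
    (hx''c : ContinuousOn x'' (Set.Ici t₀))
    (hODE : ∀ t ≥ t₀, x'' t + (α / t ^ q) • x' t + g' (x t) + (a / t ^ p) • x t = 0)
    (xstar : H) (hxstar : ∀ y : H, g xstar ≤ g y)
    (hq1 : q < 1) (hp2 : p ≤ 2) (hpa : p = 2 → a ≥ q * (1 - q))
    (hpq : p / 2 ≤ q) :
    (∃ C > (0:ℝ), ∃ t₁ ≥ t₀, ∀ t ≥ t₁, |g (x t) - g xstar| ≤ C / t ^ (p)) ∧
    (∃ C > (0:ℝ), ∃ t₁ ≥ t₀, ∀ t ≥ t₁, |‖x' t‖| ≤ C / t ^ (p / 2)) := by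
  clear hg_lip hpa hp2 hx''c
  have h1q : 0 < 1 - q := by linarith
  have hp2q : p ≤ 2 * q := by linarith
  obtain ⟨b, hbdef⟩ : ∃ z : ℝ, z = 2 * p := ⟨_, rfl⟩
  have hb0 : 0 < b := by rw [hbdef]; linarith
  obtain ⟨κ, hκdef⟩ : ∃ z : ℝ, z = min p ((1 + q - p) / 2) := ⟨_, rfl⟩
  have hδ0 : 0 < (1 + q - p) / 2 := by linarith
  have hκ0 : 0 < κ := by rw [hκdef]; exact lt_min hp0 hδ0
  have hκp : κ ≤ p := by rw [hκdef]; exact min_le_left _ _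
  have hκδ : κ ≤ (1 + q - p) / 2 := by rw [hκdef]; exact min_le_right _ _
  obtain ⟨c4, hc4def⟩ : ∃ z : ℝ, z = b * |p - 1 + κ| := ⟨_, rfl⟩
  have hc40 : 0 ≤ c4 := by rw [hc4def]; positivity
  obtain ⟨C, hCdef⟩ : ∃ z : ℝ, z = a * b / 2 * ⟪xstar, xstar⟫ + 1 := ⟨_, rfl⟩
  have hns0 : (0:ℝ) ≤ ⟪xstar, xstar⟫ := real_inner_self_nonneg
  have hC0 : 0 < C := by
    rw [hCdef]
    have : (0:ℝ) ≤ a * b / 2 * ⟪xstar, xstar⟫ := mul_nonneg (by positivity) hns0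
    linarith
  obtain ⟨R₀, hR₀def⟩ : ∃ z : ℝ, z = max (max ((p/2 + b + κ/2 + c4/2) / α)
      (c4 / ((1 + q - p) / 2 * b * α))) (2 * b / α) := ⟨_, rfl⟩
  have hup1 : (p/2 + b + κ/2 + c4/2) / α ≤ R₀ := by
    rw [hR₀def]; exact le_trans (le_max_left _ _) (le_max_left _ _)
  have hup2 : c4 / ((1 + q - p) / 2 * b * α) ≤ R₀ := by
    rw [hR₀def]; exact le_trans (le_max_right _ _) (le_max_left _ _)
  have hup3 : 2 * b / α ≤ R₀ := by rw [hR₀def]; exact le_max_right _ _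
  obtain ⟨M₀, hM₀def⟩ : ∃ z : ℝ, z = max 1 R₀ := ⟨_, rfl⟩
  have hM₀1 : (1:ℝ) ≤ M₀ := by rw [hM₀def]; exact le_max_left _ _
  have hM₀0 : (0:ℝ) ≤ M₀ := by linarith
  have hR₀M : R₀ ≤ M₀ := by rw [hM₀def]; exact le_max_right _ _
  obtain ⟨t₁, ht₁def⟩ : ∃ z : ℝ, z = max t₀ (M₀ ^ (1 / (1 - q))) := ⟨_, rfl⟩
  have ht₁t₀ : t₀ ≤ t₁ := by rw [ht₁def]; exact le_max_left _ _
  have ht₁pos : 0 < t₁ := lt_of_lt_of_le ht₀ ht₁t₀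
  -- largeness of t^(1-q) for t ≥ t₁
  have hRt : ∀ t : ℝ, t₁ ≤ t → M₀ ≤ t ^ (1 - q) := by
    intro t ht
    rw [ht₁def] at ht
    have hT : M₀ ^ (1 / (1 - q)) ≤ t := le_trans (le_max_right _ _) ht
    have h0 : (0:ℝ) ≤ M₀ ^ (1 / (1 - q)) := Real.rpow_nonneg hM₀0 _
    have h1 := Real.rpow_le_rpow h0 hT (le_of_lt h1q)
    have h2 : (M₀ ^ (1 / (1 - q))) ^ (1 - q) = M₀ := by
      rw [← Real.rpow_mul hM₀0]
      rw [show 1 / (1 - q) * (1 - q) = 1 by field_simp]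
      exact Real.rpow_one M₀
    linarith [h1, h2.ge, h2.le]
  obtain ⟨u, hu⟩ : ∃ z : ℝ → H, z = fun s => x s - xstar := ⟨_, rfl⟩
  obtain ⟨E, hEdef⟩ : ∃ z : ℝ → ℝ, z = fun s => s ^ p * (g (x s) - g xstar) + s ^ p / 2 * ⟪x' s, x' s⟫
      + a / 2 * ⟪x s, x s⟫ + b * (s ^ (p - 1) * ⟪u s, x' s⟫)
      + b * α / 2 * (s ^ (p - 1 - q) * ⟪u s, u s⟫) := ⟨_, rfl⟩
  obtain ⟨Ed, hEddef⟩ : ∃ z : ℝ → ℝ, z = fun s => (p * s ^ (p - 1) * (g (x s) - g xstar) + s ^ p * ⟪g' (x s), x' s⟫)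
      + (p * s ^ (p - 1) / 2 * ⟪x' s, x' s⟫ + s ^ p / 2 * (⟪x' s, x'' s⟫ + ⟪x'' s, x' s⟫))
      + a / 2 * (⟪x s, x' s⟫ + ⟪x' s, x s⟫)
      + b * ((p - 1) * s ^ (p - 1 - 1) * ⟪u s, x' s⟫
          + s ^ (p - 1) * (⟪u s, x'' s⟫ + ⟪x' s, x' s⟫))
      + b * α / 2 * ((p - 1 - q) * s ^ (p - 1 - q - 1) * ⟪u s, u s⟫
          + s ^ (p - 1 - q) * (⟪u s, x' s⟫ + ⟪x' s, u s⟫)) := ⟨_, rfl⟩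
  have hEderiv : ∀ t : ℝ, t₀ ≤ t → HasDerivAt E (Ed t) t := by
    intro t ht
    have htpos : 0 < t := lt_of_lt_of_le ht₀ ht
    have hxt := hx t ht
    have hvt := hx' t ht
    have hgc : HasDerivAt (fun s => g (x s)) ⟪g' (x t), x' t⟫ t := by
      have := (hg_grad (x t)).hasFDerivAt.comp_hasDerivAt t hxt
      simp at this
      exact this
    have hut : HasDerivAt u (x' t) t := by
      rw [hu]; exact hxt.sub_const xstar
    have hP : ∀ r : ℝ, HasDerivAt (fun s : ℝ => s ^ r) (r * t ^ (r - 1)) t := fun r =>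
      Real.hasDerivAt_rpow_const (Or.inl (ne_of_gt htpos))
    rw [hEdef, hEddef]
    exact (((((hP p).mul (hgc.sub_const (g xstar))).add
        (((hP p).div_const 2).mul (hvt.inner ℝ hvt))).add
        ((hxt.inner ℝ hxt).const_mul (a / 2))).add
        (((hP (p - 1)).mul (hut.inner ℝ hvt)).const_mul b)).add
        (((hP (p - 1 - q)).mul (hut.inner ℝ hut)).const_mul (b * α / 2))
  have hkey : ∀ t : ℝ, t₁ ≤ t → t * Ed t + κ * E t ≤ C := by
    intro t ht
    have ht0t : t₀ ≤ t := le_trans ht₁t₀ ht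
    have htpos : 0 < t := lt_of_lt_of_le ht₀ ht0t
    have htne : t ≠ 0 := ne_of_gt htpos
    have hRpos : 0 < t ^ (1 - q) := Real.rpow_pos_of_pos htpos _
    have hRM := hRt t ht
    have hR1 : p/2 + b + κ/2 + c4/2 ≤ α * t ^ (1 - q) := by
      have h1 : (p/2 + b + κ/2 + c4/2) / α ≤ t ^ (1 - q) :=
        le_trans (le_trans hup1 hR₀M) hRM
      have h2 := (div_le_iff₀ hα).1 h1
      linarith
    have hR2 : c4 ≤ (1 + q - p) / 2 * b * α * t ^ (1 - q) := by
      have hpos : (0:ℝ) < (1 + q - p) / 2 * b * α := by positivity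
      have h1 : c4 / ((1 + q - p) / 2 * b * α) ≤ t ^ (1 - q) :=
        le_trans (le_trans hup2 hR₀M) hRM
      have h2 := (div_le_iff₀ hpos).1 h1
      linarith
    have hR3 : 2 * b ≤ α * t ^ (1 - q) := by
      have h1 : 2 * b / α ≤ t ^ (1 - q) :=
        le_trans (le_trans hup3 hR₀M) hRM
      have h2 := (div_le_iff₀ hα).1 h1
      linarith
    have hP0 : (0:ℝ) ≤ t ^ (p - 1) := (Real.rpow_pos_of_pos htpos _).le
    -- ODE rearrangement
    have hxdd : x'' t = -((α / t ^ q) • x' t) + -(g' (x t)) + -((a / t ^ p) • x t) := by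
      have h := hODE t ht0t
      rw [show x'' t + (α / t ^ q) • x' t + g' (x t) + (a / t ^ p) • x t
          = x'' t - (-((α / t ^ q) • x' t) + -(g' (x t)) + -((a / t ^ p) • x t)) from by abel] at h
      exact sub_eq_zero.mp h
    have hivdd : ⟪x' t, x'' t⟫ = -(α / t ^ q * ⟪x' t, x' t⟫) - ⟪g' (x t), x' t⟫
        - a / t ^ p * ⟪x t, x' t⟫ := by
      rw [hxdd]
      simp only [inner_add_right, inner_neg_right, real_inner_smul_right]
      rw [real_inner_comm (x' t) (g' (x t)), real_inner_comm (x' t) (x t)]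
      ring
    have hiudd : ⟪u t, x'' t⟫ = -(α / t ^ q * ⟪u t, x' t⟫) - ⟪g' (x t), u t⟫
        - a / t ^ p * ⟪u t, x t⟫ := by
      rw [hxdd]
      simp only [inner_add_right, inner_neg_right, real_inner_smul_right]
      rw [real_inner_comm (u t) (g' (x t))]
      ring
    have hiux : ⟪u t, x t⟫ = (⟪x t, x t⟫ + ⟪u t, u t⟫ - ⟪xstar, xstar⟫) / 2 := by
      simp only [hu]
      rw [inner_sub_left, inner_sub_left, inner_sub_right, inner_sub_right,
        real_inner_comm xstar (x t)]
      ring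
    -- power identities
    have hp1 : t ^ p = t * t ^ (p - 1) := rpow_shift htpos p
    have hp2 : t ^ (p - 1 - 1) = t ^ (p - 1) * t⁻¹ := rpow_shift' htpos (p - 1)
    have hp3 : t ^ (p - 1 - q) = t ^ (p - 1) * t ^ (1 - q) * t⁻¹ := by
      have h1 : t ^ ((p - 1) + (1 - q)) = t ^ (p - 1) * t ^ (1 - q) := Real.rpow_add htpos _ _
      have h2 := rpow_shift' htpos ((p - 1) + (1 - q))
      rw [h1] at h2
      rw [show p - 1 - q = (p - 1) + (1 - q) - 1 by ring, h2]
    have hp4 : t ^ (p - 1 - q - 1) = t ^ (p - 1) * t ^ (1 - q) * t⁻¹ * t⁻¹ := by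
      have h2 := rpow_shift' htpos (p - 1 - q)
      rw [hp3] at h2
      exact h2
    have hq5 : t ^ q * t ^ (1 - q) = t := by
      rw [← Real.rpow_add htpos, show q + (1 - q) = 1 by ring, Real.rpow_one]
    have hp5 : t ^ q = t * (t ^ (1 - q))⁻¹ := by
      field_simp
      linarith [hq5]
    -- bounds on each term
    have hA0 : 0 ≤ g (x t) - g xstar := sub_nonneg.2 (hxstar (x t))
    have hnv0 : (0:ℝ) ≤ ⟪x' t, x' t⟫ := real_inner_self_nonneg
    have hnu0 : (0:ℝ) ≤ ⟪u t, u t⟫ := real_inner_self_nonneg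
    have hnx0 : (0:ℝ) ≤ ⟪x t, x t⟫ := real_inner_self_nonneg
    have hnveq : ⟪x' t, x' t⟫ = ‖x' t‖ ^ 2 := real_inner_self_eq_norm_sq _
    have hnueq : ⟪u t, u t⟫ = ‖u t‖ ^ 2 := real_inner_self_eq_norm_sq _
    have hiuG : g (x t) - g xstar ≤ ⟪g' (x t), u t⟫ := by
      have h := convex_grad_ineq hg_convex (hg_grad (x t)) xstar
      have h2 : xstar - x t = -(u t) := by simp [hu]
      rw [h2, inner_neg_right] at h
      linarith
    have habs : |⟪u t, x' t⟫| ≤ ‖u t‖ * ‖x' t‖ := abs_real_inner_le_norm _ _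
    have hT1 : (κ - p) * (t * t * t ^ (p - 1) * (g (x t) - g xstar)) ≤ 0 :=
      mul_nonpos_of_nonpos_of_nonneg (by linarith)
        (mul_nonneg (mul_nonneg (mul_nonneg htpos.le htpos.le) hP0) hA0)
    have hT2 : b * (t * t * t ^ (p - 1)) * ((g (x t) - g xstar) - ⟪g' (x t), u t⟫) ≤ 0 :=
      mul_nonpos_of_nonneg_of_nonpos
        (mul_nonneg hb0.le (mul_nonneg (mul_nonneg htpos.le htpos.le) hP0))
        (by linarith)
    have hstep1 : b * (p - 1 + κ) * ⟪u t, x' t⟫ ≤ c4 * (‖u t‖ * ‖x' t‖) := by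
      have h1 : b * (p - 1 + κ) * ⟪u t, x' t⟫ ≤ |b * (p - 1 + κ) * ⟪u t, x' t⟫| := le_abs_self _
      have h2 : |b * (p - 1 + κ) * ⟪u t, x' t⟫| = b * |p - 1 + κ| * |⟪u t, x' t⟫| := by
        rw [abs_mul, abs_mul, abs_of_nonneg hb0.le]
      have h3 : b * |p - 1 + κ| * |⟪u t, x' t⟫| ≤ b * |p - 1 + κ| * (‖u t‖ * ‖x' t‖) :=
        mul_le_mul_of_nonneg_left habs (by positivity)
      rw [hc4def]
      linarith
    have hstep2 : 2 * (t * (‖u t‖ * ‖x' t‖)) ≤ t * t * ⟪x' t, x' t⟫ + ⟪u t, u t⟫ := by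
      rw [hnveq, hnueq]
      linarith only [sq_nonneg (t * ‖x' t‖ - ‖u t‖)]
    have hcross : b * (p - 1 + κ) * (t * t ^ (p - 1) * ⟪u t, x' t⟫)
        ≤ c4/2 * (t * t * t ^ (p - 1) * ⟪x' t, x' t⟫) + c4/2 * (t ^ (p - 1) * ⟪u t, u t⟫) := by
      have e1 := mul_le_mul_of_nonneg_left hstep1 (mul_nonneg htpos.le hP0)
      have e2 := mul_le_mul_of_nonneg_left hstep2
        (mul_nonneg (by positivity : (0:ℝ) ≤ c4/2) hP0)
      linarith only [e1, e2]
    have hnuterm : (p - 1 - q + κ) * (b * α / 2) * (t ^ (p - 1) * t ^ (1 - q) * ⟪u t, u t⟫)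
        + c4/2 * (t ^ (p - 1) * ⟪u t, u t⟫) ≤ 0 := by
      have hPnu : (0:ℝ) ≤ t ^ (p - 1) * ⟪u t, u t⟫ := mul_nonneg hP0 hnu0
      have h1 : (p - 1 - q + κ) ≤ -((1 + q - p) / 2) := by linarith
      have h2 := mul_le_mul_of_nonneg_right h1
        (mul_nonneg (mul_nonneg (by positivity : (0:ℝ) ≤ b * α / 2) hRpos.le) hPnu)
      have h3 := mul_le_mul_of_nonneg_right hR2 hPnu
      linarith only [h2, h3]
    have hnvterm : ((p/2 + b + κ/2) - α * t ^ (1 - q)) * (t * t * t ^ (p - 1) * ⟪x' t, x' t⟫)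
        + c4/2 * (t * t * t ^ (p - 1) * ⟪x' t, x' t⟫) ≤ 0 := by
      have hX : (0:ℝ) ≤ t * t * t ^ (p - 1) * ⟪x' t, x' t⟫ :=
        mul_nonneg (mul_nonneg (mul_nonneg htpos.le htpos.le) hP0) hnv0
      have hcoef : (p/2 + b + κ/2) - α * t ^ (1 - q) + c4/2 ≤ 0 := by linarith
      linarith only [mul_le_mul_of_nonneg_right hcoef hX]
    have hT4 : (κ * a / 2 - a * b / 2) * (t * ⟪x t, x t⟫) ≤ 0 :=
      mul_nonpos_of_nonpos_of_nonneg
        (by have := mul_le_mul_of_nonneg_right hκp ha0.le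
            rw [hbdef]; linarith only [this, mul_le_mul_of_nonneg_right hp0.le ha0.le,
              mul_pos hp0 ha0])
        (mul_nonneg htpos.le hnx0)
    have hT5 : (0:ℝ) ≤ a * b / 2 * (t * ⟪u t, u t⟫) :=
      mul_nonneg (by positivity) (mul_nonneg htpos.le hnu0)
    have hT6 : a * b / 2 * (t * ⟪xstar, xstar⟫) = t * C - t := by
      rw [hCdef]; ring
    -- the master algebraic identity
    have heq : t * (t * Ed t + κ * E t) =
        (κ - p) * (t * t * t ^ (p - 1) * (g (x t) - g xstar))
        + b * (t * t * t ^ (p - 1)) * ((g (x t) - g xstar) - ⟪g' (x t), u t⟫)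
        + ((p/2 + b + κ/2) - α * t ^ (1 - q)) * (t * t * t ^ (p - 1) * ⟪x' t, x' t⟫)
        + b * (p - 1 + κ) * (t * t ^ (p - 1) * ⟪u t, x' t⟫)
        + (p - 1 - q + κ) * (b * α / 2) * (t ^ (p - 1) * t ^ (1 - q) * ⟪u t, u t⟫)
        + (κ * a / 2 - a * b / 2) * (t * ⟪x t, x t⟫)
        - a * b / 2 * (t * ⟪u t, u t⟫) + a * b / 2 * (t * ⟪xstar, xstar⟫) := by
      simp only [hEddef, hEdef]
      rw [real_inner_comm (x' t) (x'' t), hivdd, hiudd, real_inner_comm (x t) (x' t),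
        real_inner_comm (u t) (x' t), hiux, hp1, hp2, hp3, hp4, hp5, hbdef]
      have hRne : (t ^ (1 - q)) ≠ 0 := ne_of_gt hRpos
      field_simp
      ring
    have hfin : t * (t * Ed t + κ * E t) ≤ t * C := by
      rw [heq]
      linarith only [hT1, hT2, hcross, hnuterm, hnvterm, hT4, hT5, hT6, htpos]
    exact le_of_mul_le_mul_left hfin htpos
  -- lower bound for E
  have hElow : ∀ t : ℝ, t₁ ≤ t → t ^ p * (g (x t) - g xstar) ≤ E t
      ∧ t ^ p * ⟪x' t, x' t⟫ ≤ 4 * E t := by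
    intro t ht
    have ht0t : t₀ ≤ t := le_trans ht₁t₀ ht
    have htpos : 0 < t := lt_of_lt_of_le ht₀ ht0t
    have htne : t ≠ 0 := ne_of_gt htpos
    have hRpos : 0 < t ^ (1 - q) := Real.rpow_pos_of_pos htpos _
    have hRM := hRt t ht
    have hR3 : 2 * b ≤ α * t ^ (1 - q) := by
      have h1 : 2 * b / α ≤ t ^ (1 - q) :=
        le_trans (le_trans hup3 hR₀M) hRM
      have h2 := (div_le_iff₀ hα).1 h1
      linarith
    have hP0 : (0:ℝ) ≤ t ^ (p - 1) := (Real.rpow_pos_of_pos htpos _).le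
    have hp1 : t ^ p = t * t ^ (p - 1) := rpow_shift htpos p
    have hp3 : t ^ (p - 1 - q) = t ^ (p - 1) * t ^ (1 - q) * t⁻¹ := by
      have h1 : t ^ ((p - 1) + (1 - q)) = t ^ (p - 1) * t ^ (1 - q) := Real.rpow_add htpos _ _
      have h2 := rpow_shift' htpos ((p - 1) + (1 - q))
      rw [h1] at h2
      rw [show p - 1 - q = (p - 1) + (1 - q) - 1 by ring, h2]
    have hA0 : 0 ≤ g (x t) - g xstar := sub_nonneg.2 (hxstar (x t))
    have hnv0 : (0:ℝ) ≤ ⟪x' t, x' t⟫ := real_inner_self_nonneg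
    have hnu0 : (0:ℝ) ≤ ⟪u t, u t⟫ := real_inner_self_nonneg
    have hnx0 : (0:ℝ) ≤ ⟪x t, x t⟫ := real_inner_self_nonneg
    have hnveq : ⟪x' t, x' t⟫ = ‖x' t‖ ^ 2 := real_inner_self_eq_norm_sq _
    have hnueq : ⟪u t, u t⟫ = ‖u t‖ ^ 2 := real_inner_self_eq_norm_sq _
    have habs : |⟪u t, x' t⟫| ≤ ‖u t‖ * ‖x' t‖ := abs_real_inner_le_norm _ _
    have hEexp : t * E t = t * (t * t ^ (p - 1)) * (g (x t) - g xstar)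
        + t * (t * t ^ (p - 1)) / 2 * ⟪x' t, x' t⟫ + a / 2 * (t * ⟪x t, x t⟫)
        + b * (t * t ^ (p - 1) * ⟪u t, x' t⟫)
        + b * α / 2 * (t ^ (p - 1) * t ^ (1 - q) * ⟪u t, u t⟫) := by
      simp only [hEdef]
      rw [hp1, hp3]
      field_simp
    have hneg : -(‖u t‖ * ‖x' t‖) ≤ ⟪u t, x' t⟫ := (abs_le.1 habs).1
    have e1 : -(b * (t * t ^ (p - 1)) * (‖u t‖ * ‖x' t‖)) ≤ b * (t * t ^ (p - 1) * ⟪u t, x' t⟫) := by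
      have h := mul_le_mul_of_nonneg_left hneg
        (mul_nonneg hb0.le (mul_nonneg htpos.le hP0))
      linarith only [h]
    have e2 : t * (b * (‖u t‖ * ‖x' t‖)) ≤ t * t * ⟪x' t, x' t⟫ / 4 + b * b * ⟪u t, u t⟫ := by
      rw [hnveq, hnueq]
      linarith only [sq_nonneg (t * ‖x' t‖ / 2 - b * ‖u t‖)]
    have e2' := mul_le_mul_of_nonneg_left e2 hP0
    have e3 := mul_le_mul_of_nonneg_right hR3
      (mul_nonneg (mul_nonneg (by positivity : (0:ℝ) ≤ b / 2) hP0) hnu0)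
    have n1 : (0:ℝ) ≤ t * t * t ^ (p - 1) * ⟪x' t, x' t⟫ :=
      mul_nonneg (mul_nonneg (mul_nonneg htpos.le htpos.le) hP0) hnv0
    have n2 : (0:ℝ) ≤ a / 2 * (t * ⟪x t, x t⟫) :=
      mul_nonneg (div_nonneg ha0.le (by norm_num)) (mul_nonneg htpos.le hnx0)
    have n3 : (0:ℝ) ≤ t * (t * t ^ (p - 1)) * (g (x t) - g xstar) :=
      mul_nonneg (mul_nonneg htpos.le (mul_nonneg htpos.le hP0)) hA0
    constructor
    · have h1 : t * (t ^ p * (g (x t) - g xstar)) ≤ t * E t := by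
        rw [hp1, hEexp]
        linarith only [e1, e2', e3, n1, n2]
      exact le_of_mul_le_mul_left h1 htpos
    · have h1 : t * (t ^ p * ⟪x' t, x' t⟫) ≤ t * (4 * E t) := by
        rw [hp1]
        have h4 : t * (4 * E t) = 4 * (t * E t) := by ring
        rw [h4, hEexp]
        linarith only [e1, e2', e3, n2, n3]
      exact le_of_mul_le_mul_left h1 htpos
  -- Gronwall-type boundedness of E
  obtain ⟨F, hFdef⟩ : ∃ z : ℝ → ℝ, z = fun s => s ^ κ * E s - C / κ * s ^ κ := ⟨_, rfl⟩
  have hFd : ∀ t : ℝ, t₁ ≤ t → HasDerivAt F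
      (κ * t ^ (κ - 1) * E t + t ^ κ * Ed t - C / κ * (κ * t ^ (κ - 1))) t := by
    intro t ht
    have htpos : 0 < t := lt_of_lt_of_le ht₁pos ht
    have hPκ : HasDerivAt (fun s : ℝ => s ^ κ) (κ * t ^ (κ - 1)) t :=
      Real.hasDerivAt_rpow_const (Or.inl (ne_of_gt htpos))
    rw [hFdef]
    exact (hPκ.mul (hEderiv t (le_trans ht₁t₀ ht))).sub (hPκ.const_mul (C / κ))
  have hcont : ContinuousOn F (Ici t₁) := by
    intro s hs
    exact (hFd s hs).continuousAt.continuousWithinAt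
  have hdiff : DifferentiableOn ℝ F (interior (Ici t₁)) := by
    rw [interior_Ici]
    intro s hs
    exact (hFd s (le_of_lt hs)).differentiableAt.differentiableWithinAt
  have hderiv : ∀ s ∈ interior (Ici t₁), deriv F s ≤ 0 := by
    rw [interior_Ici]
    intro s hs
    have hst : t₁ ≤ s := le_of_lt hs
    have hspos : 0 < s := lt_of_lt_of_le ht₁pos hst
    rw [(hFd s hst).deriv]
    have h1 : s ^ κ = s * s ^ (κ - 1) := rpow_shift hspos κ
    have h2 : (0:ℝ) ≤ s ^ (κ - 1) := (Real.rpow_pos_of_pos hspos _).le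
    have h4 := mul_le_mul_of_nonneg_left (hkey s hst) h2
    have h5 : C / κ * (κ * s ^ (κ - 1)) = C * s ^ (κ - 1) := by
      field_simp
    rw [h1, h5]
    linarith only [h4]
  have hFanti : AntitoneOn F (Ici t₁) :=
    antitoneOn_of_deriv_nonpos (convex_Ici t₁) hcont hdiff hderiv
  obtain ⟨M, hMdef⟩ : ∃ z : ℝ, z = C / κ + |E t₁| := ⟨_, rfl⟩
  have hM0 : 0 < M := by
    have h1 := abs_nonneg (E t₁)
    have h2 := div_pos hC0 hκ0
    rw [hMdef]; linarith
  have hEbound : ∀ t : ℝ, t₁ ≤ t → E t ≤ M := by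
    intro t ht
    have htpos : 0 < t := lt_of_lt_of_le ht₁pos ht
    have h := hFanti self_mem_Ici (mem_Ici.2 ht) ht
    simp only [hFdef] at h
    have hb1 : t₁ ^ κ ≤ t ^ κ := Real.rpow_le_rpow ht₁pos.le ht hκ0.le
    have hb2 : t₁ ^ κ * E t₁ ≤ t₁ ^ κ * |E t₁| :=
      mul_le_mul_of_nonneg_left (le_abs_self _) (Real.rpow_nonneg ht₁pos.le _)
    have hb3 : t₁ ^ κ * |E t₁| ≤ t ^ κ * |E t₁| :=
      mul_le_mul_of_nonneg_right hb1 (abs_nonneg _)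
    have hb4 : 0 ≤ C / κ * t₁ ^ κ :=
      mul_nonneg (le_of_lt (div_pos hC0 hκ0)) (Real.rpow_nonneg ht₁pos.le _)
    have htκpos : 0 < t ^ κ := Real.rpow_pos_of_pos htpos _
    have h6 : t ^ κ * E t ≤ t ^ κ * (C / κ) + t ^ κ * |E t₁| := by
      linarith only [h, hb2, hb3, hb4]
    have h7 : t ^ κ * E t ≤ t ^ κ * (C / κ + |E t₁|) := by
      rw [mul_add]; exact h6
    have h8 := le_of_mul_le_mul_left h7 htκpos
    rw [hMdef]
    exact h8
  have hfinal1 : ∀ t : ℝ, t₁ ≤ t → |g (x t) - g xstar| ≤ (M + 1) / t ^ p := by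
    intro t ht
    have htpos : 0 < t := lt_of_lt_of_le ht₁pos ht
    have htp : 0 < t ^ p := Real.rpow_pos_of_pos htpos _
    have h1 := (hElow t ht).1
    have h2 := hEbound t ht
    have hA0 : 0 ≤ g (x t) - g xstar := sub_nonneg.2 (hxstar (x t))
    rw [abs_of_nonneg hA0, le_div_iff₀ htp]
    linarith only [h1, h2]
  have hfinal2 : ∀ t : ℝ, t₁ ≤ t → |‖x' t‖| ≤ (2 * Real.sqrt M + 1) / t ^ (p / 2) := by
    intro t ht
    have htpos : 0 < t := lt_of_lt_of_le ht₁pos ht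
    have htp2 : 0 < t ^ (p / 2) := Real.rpow_pos_of_pos htpos _
    have h1 := (hElow t ht).2
    have h2 := hEbound t ht
    rw [abs_norm, le_div_iff₀ htp2]
    have hhalf : t ^ (p / 2) * t ^ (p / 2) = t ^ p := by
      rw [← Real.rpow_add htpos, show p / 2 + p / 2 = p by ring]
    have hsq : (‖x' t‖ * t ^ (p / 2)) ^ 2 ≤ 4 * M := by
      have he : (‖x' t‖ * t ^ (p / 2)) ^ 2 = t ^ p * ⟪x' t, x' t⟫ := by
        rw [real_inner_self_eq_norm_sq, ← hhalf]; ring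
      rw [he]
      linarith only [h1, h2]
    calc ‖x' t‖ * t ^ (p / 2) = Real.sqrt ((‖x' t‖ * t ^ (p / 2)) ^ 2) :=
          (Real.sqrt_sq (by positivity)).symm
      _ ≤ Real.sqrt (4 * M) := Real.sqrt_le_sqrt hsq
      _ = 2 * Real.sqrt M := by
          rw [show (4:ℝ) * M = 2 ^ 2 * M by ring, Real.sqrt_mul (by positivity) M,
            Real.sqrt_sq (by norm_num)]
      _ ≤ 2 * Real.sqrt M + 1 := by linarith
  exact ⟨⟨M + 1, by linarith, t₁, ht₁t₀, hfinal1⟩,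
    ⟨2 * Real.sqrt M + 1, by positivity, t₁, ht₁t₀, hfinal2⟩⟩
end

section
/- Assume q = 1, p > 2 and α = 3. Then the trajectory x(t) is bounded, ‖ẋ(t)‖ = O(1/t) as t → ∞, and g(x(t)) − g* = O(1/t^{2}) as t → ∞. -/
open Filter Topology Set MeasureTheory

local notation "⟪" x ", " y "⟫" => @inner ℝ _ _ x y

lemma grad_ineq' {H : Type*} [NormedAddCommGroup H] [InnerProductSpace ℝ H] [CompleteSpace H]
    (g : H → ℝ) (g' : H → H) (hg_convex : ConvexOn ℝ Set.univ g)
    (hg_grad : ∀ y : H, HasGradientAt g (g' y) y) (s y : H) :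
    (inner ℝ (g' s) (y - s) : ℝ) ≤ g y - g s := by
  have hline : HasDerivAt (fun r : ℝ => s + r • (y - s)) (y - s) 0 := by
    simpa using ((hasDerivAt_id (0:ℝ)).smul_const (y - s)).const_add s
  have hphi : HasDerivAt (fun r : ℝ => g (s + r • (y - s))) (inner ℝ (g' s) (y - s) : ℝ) 0 := by
    have h0 : s + (0:ℝ) • (y - s) = s := by simp
    have := ((h0 ▸ (hg_grad s).hasFDerivAt).comp_hasDerivAt 0 hline :
      HasDerivAt (fun r : ℝ => g (s + r • (y - s))) _ 0)
    simpa [InnerProductSpace.toDual_apply_apply] using this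
  have hslope := hasDerivAt_iff_tendsto_slope.1 hphi
  have hmono : Tendsto (slope (fun r : ℝ => g (s + r • (y - s))) 0) (𝓝[>] (0:ℝ))
      (𝓝 (inner ℝ (g' s) (y - s) : ℝ)) :=
    hslope.mono_left (nhdsWithin_mono _ (fun r hr => ne_of_gt hr))
  refine le_of_tendsto hmono ?_
  filter_upwards [Ioc_mem_nhdsGT_of_mem (by norm_num : (0:ℝ) ∈ Ico 0 1)] with r hr
  obtain ⟨hr0, hr1⟩ := hr
  have hcvx := hg_convex.2 (mem_univ s) (mem_univ y) (by linarith : (0:ℝ) ≤ 1 - r)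
    (le_of_lt hr0) (by ring)
  have hpt : (1 - r) • s + r • y = s + r • (y - s) := by module
  rw [hpt] at hcvx
  rw [slope_def_field]
  have h0' : s + (0:ℝ) • (y - s) = s := by simp
  rw [h0', sub_zero, div_le_iff₀ hr0]
  simp only [smul_eq_mul] at hcvx
  nlinarith [hcvx]

set_option maxHeartbeats 1000000

theorem stmt8
    {H : Type*} [NormedAddCommGroup H] [InnerProductSpace ℝ H] [CompleteSpace H]
    (g : H → ℝ) (g' : H → H)
    (hg_convex : ConvexOn ℝ Set.univ g)
    (hg_grad : ∀ y : H, HasGradientAt g (g' y) y)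
    (hg_lip : ∀ s : Set H, Bornology.IsBounded s → ∃ K : NNReal, LipschitzOnWith K g' s)
    (t₀ α q a p : ℝ) (ht₀ : 0 < t₀) (hα : 0 < α) (hq0 : 0 < q) (ha0 : 0 < a) (hp0 : 0 < p)
    (x x' x'' : ℝ → H)
    (hx : ∀ t ≥ t₀, HasDerivAt x (x' t) t)
    (hx' : ∀ t ≥ t₀, HasDerivAt x' (x'' t) t)
    (hx''c : ContinuousOn x'' (Set.Ici t₀))
    (hODE : ∀ t ≥ t₀, x'' t + (α / t ^ q) • x' t + g' (x t) + (a / t ^ p) • x t = 0)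
    (xstar : H) (hxstar : ∀ y : H, g xstar ≤ g y)
    (hq1 : q = 1) (hp2 : p > 2) (hα3 : α = 3) :
    (∃ M > (0:ℝ), ∀ t ≥ t₀, ‖x t‖ ≤ M) ∧
    (∃ C > (0:ℝ), ∃ t₁ ≥ t₀, ∀ t ≥ t₁, |‖x' t‖| ≤ C / t ^ ((1:ℝ))) ∧
    (∃ C > (0:ℝ), ∃ t₁ ≥ t₀, ∀ t ≥ t₁, |g (x t) - g xstar| ≤ C / t ^ ((2:ℝ))) := by
  subst hq1; subst hα3
  have hp2' : (0:ℝ) < p - 2 := by linarith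
  -- definitions
  set v : ℝ → H := fun s => (x s - xstar) + (s/2) • x' s with hv_def
  set F : ℝ → ℝ := fun s => s*s*(g (x s) - g xstar) + 2*⟪v s, v s⟫
      + a * s^(2-p) * ⟪x s - xstar, x s - xstar⟫ with hF_def
  set G : ℝ → ℝ := fun s => Real.exp (a * s^(2-p)/(p-2)) * (F s + ⟪xstar, xstar⟫) with hG_def
  set Φ : ℝ → ℝ := fun t => ((1*t+t*1)*(g (x t) - g xstar) + (t*t)*⟪g' (x t), x' t⟫
      + 2*(⟪v t, -((t/2) • g' (x t)) - ((a * t^(1-p))/2) • x t⟫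
          + ⟪-((t/2) • g' (x t)) - ((a * t^(1-p))/2) • x t, v t⟫))
      + ((a * ((2-p) * t^(2-p-1))) * ⟪x t - xstar, x t - xstar⟫
        + (a * t^(2-p)) * (⟪x t - xstar, x' t⟫ + ⟪x' t, x t - xstar⟫)) with hΦ_def
  set DG : ℝ → ℝ := fun t => Real.exp (a * t^(2-p)/(p-2)) * ((a * ((2-p) * t^(2-p-1)))/(p-2))
      * (F t + ⟪xstar, xstar⟫) + Real.exp (a * t^(2-p)/(p-2)) * Φ t with hDG_def
  -- basic positivity per t
  have hts : ∀ t : ℝ, t₀ ≤ t → 0 < t := fun t ht => lt_of_lt_of_le ht₀ ht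
  -- derivative of v
  have hvd : ∀ t ≥ t₀, HasDerivAt v (-((t/2) • g' (x t)) - ((a * t^(1-p))/2) • x t) t := by
    intro t ht
    have htp : (0:ℝ) < t := hts t ht
    have h1 : HasDerivAt v (x' t + ((t/2) • x'' t + ((1:ℝ)/2) • x' t)) t :=
      ((hx t ht).sub_const xstar).add ((((hasDerivAt_id t).div_const 2)).smul (hx' t ht))
    have hode := hODE t ht
    rw [Real.rpow_one] at hode
    have hxx : x'' t = -((3/t) • x' t) - g' (x t) - (a / t^p) • x t := by
      have : x'' t = (x'' t + (3/t) • x' t + g' (x t) + (a/t^p) • x t)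
          - ((3/t) • x' t) - g' (x t) - (a/t^p) • x t := by abel
      rw [this, hode]; abel
    have hrp1 : t^((1:ℝ)-p) = t / t^p := by
      rw [Real.rpow_sub htp, Real.rpow_one]
    have htpne : t^p ≠ 0 := ne_of_gt (Real.rpow_pos_of_pos htp p)
    have hveq : x' t + ((t/2) • x'' t + ((1:ℝ)/2) • x' t)
        = -((t/2) • g' (x t)) - ((a * t^((1:ℝ)-p))/2) • x t := by
      rw [hxx, hrp1]
      match_scalars <;> (field_simp; try ring)
    rw [← hveq]; exact h1
  -- derivative of F
  have hFd : ∀ t ≥ t₀, HasDerivAt F (Φ t) t := by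
    intro t ht
    have htp : (0:ℝ) < t := hts t ht
    have hgd : HasDerivAt (fun s => g (x s)) (⟪g' (x t), x' t⟫) t := by
      have := (hg_grad (x t)).hasFDerivAt.comp_hasDerivAt t (hx t ht)
      simp only [InnerProductSpace.toDual_apply_apply] at this
      exact this
    have h1 : HasDerivAt (fun s : ℝ => s*s*(g (x s) - g xstar))
        ((1*t+t*1)*(g (x t) - g xstar) + (t*t)*⟪g' (x t), x' t⟫) t :=
      ((hasDerivAt_id t).mul (hasDerivAt_id t)).mul (hgd.sub_const (g xstar))
    have h2 : HasDerivAt (fun s : ℝ => 2*⟪v s, v s⟫)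
        (2*(⟪v t, -((t/2) • g' (x t)) - ((a * t^(1-p))/2) • x t⟫
          + ⟪-((t/2) • g' (x t)) - ((a * t^(1-p))/2) • x t, v t⟫)) t :=
      (HasDerivAt.inner ℝ (hvd t ht) (hvd t ht)).const_mul 2
    have h3 : HasDerivAt (fun s : ℝ => a * s^(2-p) * ⟪x s - xstar, x s - xstar⟫)
        ((a * ((2-p) * t^(2-p-1))) * ⟪x t - xstar, x t - xstar⟫
          + (a * t^(2-p)) * (⟪x t - xstar, x' t⟫ + ⟪x' t, x t - xstar⟫)) t :=
      ((Real.hasDerivAt_rpow_const (Or.inl (ne_of_gt htp))).const_mul a).mul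
        (HasDerivAt.inner ℝ ((hx t ht).sub_const xstar) ((hx t ht).sub_const xstar))
    exact ((h1.add h2).add h3 : _)
  -- derivative of G
  have hGd : ∀ t ≥ t₀, HasDerivAt G (DG t) t := by
    intro t ht
    have htp : (0:ℝ) < t := hts t ht
    exact ((((Real.hasDerivAt_rpow_const (Or.inl (ne_of_gt htp))).const_mul a).div_const
      (p-2)).exp).mul ((hFd t ht).add_const ⟪xstar, xstar⟫)
  -- key differential inequality: DG ≤ 0
  have hkey : ∀ t ≥ t₀, DG t ≤ 0 := by
    intro t ht
    have htp : (0:ℝ) < t := hts t ht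
    have h211 : (2:ℝ)-p-1 = 1-p := by ring
    have h2p : t^((2:ℝ)-p) = t^((1:ℝ)-p) * t := by
      rw [show (2:ℝ)-p = (1-p)+1 by ring, Real.rpow_add_one (ne_of_gt htp)]
    have hT : (0:ℝ) < t^((1:ℝ)-p) := Real.rpow_pos_of_pos htp _
    have hs0 : 0 ≤ g (x t) - g xstar := by linarith [hxstar (x t)]
    have hcvx : g (x t) - g xstar ≤ ⟪g' (x t), x t - xstar⟫ := by
      have h := grad_ineq' g g' hg_convex hg_grad (x t) xstar
      have h2 : (⟪g' (x t), xstar - x t⟫ : ℝ) = -⟪g' (x t), x t - xstar⟫ := by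
        rw [← inner_neg_right]; congr 1; abel
      rw [h2] at h; linarith
    have huu : (0:ℝ) ≤ ⟪x t - xstar, x t - xstar⟫ := real_inner_self_nonneg
    have hVV : (0:ℝ) ≤ ⟪x' t, x' t⟫ := real_inner_self_nonneg
    have hQ : (0:ℝ) ≤ ⟪(x t - xstar) + (t/2) • x' t + xstar,
        (x t - xstar) + (t/2) • x' t + xstar⟫ := real_inner_self_nonneg
    have z1 : (0:ℝ) ≤ t*t*(g (x t) - g xstar) := mul_nonneg (by positivity) hs0
    have z2 : (0:ℝ) ≤ a*(t^((1:ℝ)-p)*t)*⟪x t - xstar, x t - xstar⟫ :=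
      mul_nonneg (by positivity) huu
    have z3 : (0:ℝ) ≤ (p+1)*⟪x t - xstar, x t - xstar⟫ := mul_nonneg (by linarith) huu
    have z4 : (0:ℝ) ≤ (t*t/4)*⟪x' t, x' t⟫ := mul_nonneg (by positivity) hVV
    have hbr : (-p)*⟪x t - xstar, x t - xstar⟫ - 2*⟪x t - xstar, xstar⟫
        + t*⟪x t - xstar, x' t⟫ - t*⟪x' t, xstar⟫ ≤ F t + ⟪xstar, xstar⟫ := by
      simp only [hF_def, hv_def, h2p, inner_add_left, inner_add_right, inner_sub_left,
        inner_sub_right, inner_neg_left, inner_neg_right, real_inner_smul_left,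
        real_inner_smul_right, real_inner_comm] at hQ z1 z2 z3 z4 ⊢
      linarith [hQ, z1, z2, z3, z4]
    have hPhiEq : Φ t = -(2*t*(⟪g' (x t), x t - xstar⟫ - (g (x t) - g xstar)))
        + (a*t^((1:ℝ)-p)) * ((-p)*⟪x t - xstar, x t - xstar⟫ - 2*⟪x t - xstar, xstar⟫
          + t*⟪x t - xstar, x' t⟫ - t*⟪x' t, xstar⟫) := by
      simp only [hΦ_def, h211, h2p, hv_def, inner_add_left, inner_add_right, inner_sub_left,
        inner_sub_right, inner_neg_left, inner_neg_right, real_inner_smul_left,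
        real_inner_smul_right, real_inner_comm]
      ring
    have haT : (0:ℝ) < a * t^((1:ℝ)-p) := mul_pos ha0 hT
    have hΦle : Φ t ≤ a * t^((1:ℝ)-p) * (F t + ⟪xstar, xstar⟫) := by
      rw [hPhiEq]
      have h5 := mul_le_mul_of_nonneg_left hbr (le_of_lt haT)
      have h6 : 0 ≤ 2*t*(⟪g' (x t), x t - xstar⟫ - (g (x t) - g xstar)) :=
        mul_nonneg (by positivity) (by linarith)
      linarith
    have hcoef : (a*((2-p)*t^((2:ℝ)-p-1)))/(p-2) = -(a*t^((1:ℝ)-p)) := by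
      rw [h211]; field_simp; ring
    have hDGeq : DG t = Real.exp (a*t^(2-p)/(p-2))
        * (Φ t - a*t^((1:ℝ)-p)*(F t + ⟪xstar, xstar⟫)) := by
      simp only [hDG_def]
      rw [show Real.exp (a * t ^ (2 - p) / (p - 2)) * (a * ((2 - p) * t ^ (2 - p - 1)) / (p - 2))
          * (F t + ⟪xstar, xstar⟫) = Real.exp (a * t ^ (2 - p) / (p - 2))
          * ((a * ((2 - p) * t ^ ((2:ℝ) - p - 1))) / (p - 2) * (F t + ⟪xstar, xstar⟫)) by ring,
        hcoef]
      ring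
    rw [hDGeq]
    exact mul_nonpos_of_nonneg_of_nonpos (Real.exp_pos _).le (by linarith)
  -- G is antitone on Ici t₀
  have hGanti : AntitoneOn G (Ici t₀) := by
    apply antitoneOn_of_deriv_nonpos (convex_Ici t₀)
    · exact fun t ht => (hGd t ht).continuousAt.continuousWithinAt
    · intro t ht
      rw [interior_Ici] at ht
      exact (hGd t (le_of_lt ht)).differentiableAt.differentiableWithinAt
    · intro t ht
      rw [interior_Ici] at ht
      rw [(hGd t (le_of_lt ht)).deriv]
      exact hkey t (le_of_lt ht)
  -- F + ⟪xstar,xstar⟫ bounded by G t₀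
  have hFnn : ∀ t ≥ t₀, 0 ≤ F t ∧ t*t*(g (x t) - g xstar) ≤ F t ∧ 2*⟪v t, v t⟫ ≤ F t := by
    intro t ht
    have htp : (0:ℝ) < t := hts t ht
    have hs0 : 0 ≤ g (x t) - g xstar := by linarith [hxstar (x t)]
    have z1 : (0:ℝ) ≤ t*t*(g (x t) - g xstar) := mul_nonneg (by positivity) hs0
    have z2 : (0:ℝ) ≤ 2*⟪v t, v t⟫ := by
      have : (0:ℝ) ≤ ⟪v t, v t⟫ := real_inner_self_nonneg
      linarith
    have z3 : (0:ℝ) ≤ a * t^(2-p) * ⟪x t - xstar, x t - xstar⟫ := by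
      have h1 : (0:ℝ) ≤ ⟪x t - xstar, x t - xstar⟫ := real_inner_self_nonneg
      have h2 : (0:ℝ) < t^((2:ℝ)-p) := Real.rpow_pos_of_pos htp _
      positivity
    refine ⟨by simp only [hF_def]; linarith, by simp only [hF_def]; linarith,
      by simp only [hF_def]; linarith⟩
  have hxx0 : (0:ℝ) ≤ ⟪xstar, xstar⟫ := real_inner_self_nonneg
  have hFb : ∀ t ≥ t₀, F t + ⟪xstar, xstar⟫ ≤ G t₀ := by
    intro t ht
    have htp : (0:ℝ) < t := hts t ht
    have h1 : G t ≤ G t₀ := hGanti (self_mem_Ici) ht ht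
    have h2 : F t + ⟪xstar, xstar⟫ ≤ G t := by
      simp only [hG_def]
      have he : (1:ℝ) ≤ Real.exp (a * t^(2-p)/(p-2)) := by
        apply Real.one_le_exp
        have : (0:ℝ) < t^((2:ℝ)-p) := Real.rpow_pos_of_pos htp _
        positivity
      have h3 : 0 ≤ F t + ⟪xstar, xstar⟫ := by linarith [(hFnn t ht).1]
      nlinarith [mul_le_mul_of_nonneg_right he h3]
    linarith
  -- bound on ‖v t‖
  set cv : ℝ := Real.sqrt (G t₀ / 2) with hcv_def
  have hcv0 : 0 ≤ cv := Real.sqrt_nonneg _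
  have hG0 : 0 ≤ G t₀ := le_trans (by linarith [(hFnn t₀ le_rfl).1]) (hFb t₀ le_rfl)
  have hvb : ∀ t ≥ t₀, ‖v t‖ ≤ cv := by
    intro t ht
    rw [hcv_def]
    rw [show ‖v t‖ = Real.sqrt (⟪v t, v t⟫) by
      rw [real_inner_self_eq_norm_sq]; simp [Real.sqrt_sq (norm_nonneg _)]]
    apply Real.sqrt_le_sqrt
    have := (hFnn t ht).2.2
    have := hFb t ht
    linarith
  -- second Lyapunov function for boundedness of the trajectory
  set ψ : ℝ → ℝ := fun s => (s*s)*(s*s)*⟪x s - xstar, x s - xstar⟫ + 1 with hψ_def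
  set dψ : ℝ → ℝ := fun t => ((1*t+t*1)*(t*t) + (t*t)*(1*t+t*1))*⟪x t - xstar, x t - xstar⟫
      + ((t*t)*(t*t))*(⟪x t - xstar, x' t⟫ + ⟪x' t, x t - xstar⟫) with hdψ_def
  set η : ℝ → ℝ := fun s => Real.sqrt (ψ s) - cv*(s*s) with hη_def
  have hψpos : ∀ t : ℝ, (0:ℝ) < ψ t := by
    intro t
    simp only [hψ_def]
    have h1 : (0:ℝ) ≤ ⟪x t - xstar, x t - xstar⟫ := real_inner_self_nonneg
    nlinarith [sq_nonneg (t*t)]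
  have hψd : ∀ t ≥ t₀, HasDerivAt ψ (dψ t) t := by
    intro t ht
    exact ((((hasDerivAt_id t).mul (hasDerivAt_id t)).mul
      ((hasDerivAt_id t).mul (hasDerivAt_id t))).mul
      (HasDerivAt.inner ℝ ((hx t ht).sub_const xstar) ((hx t ht).sub_const xstar))).add_const 1
  have hηd : ∀ t ≥ t₀, HasDerivAt η (1/(2*Real.sqrt (ψ t)) * dψ t - cv*(1*t+t*1)) t := by
    intro t ht
    exact ((Real.hasDerivAt_sqrt (ne_of_gt (hψpos t))).comp t (hψd t ht)).sub
      (((hasDerivAt_id t).mul (hasDerivAt_id t)).const_mul cv)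
  have htu : ∀ t ≥ t₀, t*t*‖x t - xstar‖ ≤ Real.sqrt (ψ t) := by
    intro t ht
    have htp : (0:ℝ) < t := hts t ht
    rw [Real.le_sqrt (by positivity) (hψpos t).le]
    simp only [hψ_def]
    rw [real_inner_self_eq_norm_sq]
    nlinarith [norm_nonneg (x t - xstar)]
  have hηkey : ∀ t ≥ t₀, 1/(2*Real.sqrt (ψ t)) * dψ t - cv*(1*t+t*1) ≤ 0 := by
    intro t ht
    have htp : (0:ℝ) < t := hts t ht
    have hsq : (0:ℝ) < Real.sqrt (ψ t) := Real.sqrt_pos.mpr (hψpos t)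
    have huv' : dψ t = 4*(t*t*t)*⟪x t - xstar, v t⟫ := by
      simp only [hdψ_def, hv_def, inner_add_left, inner_add_right, inner_sub_left,
        inner_sub_right, real_inner_smul_left, real_inner_smul_right, real_inner_comm]
      ring
    have hCS : (⟪x t - xstar, v t⟫:ℝ) ≤ ‖x t - xstar‖ * cv :=
      le_trans (real_inner_le_norm _ _)
        (mul_le_mul_of_nonneg_left (hvb t ht) (norm_nonneg _))
    have d1 : dψ t ≤ 4*cv*t*(t*t*‖x t - xstar‖) := by
      rw [huv']
      calc 4*(t*t*t)*⟪x t - xstar, v t⟫ ≤ 4*(t*t*t)*(‖x t - xstar‖ * cv) :=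
            mul_le_mul_of_nonneg_left hCS (by positivity)
        _ = 4*cv*t*(t*t*‖x t - xstar‖) := by ring
    have d2 : dψ t ≤ 4*cv*t*Real.sqrt (ψ t) := by
      calc dψ t ≤ 4*cv*t*(t*t*‖x t - xstar‖) := d1
        _ ≤ 4*cv*t*Real.sqrt (ψ t) :=
            mul_le_mul_of_nonneg_left (htu t ht) (by positivity)
    have d3 : 1/(2*Real.sqrt (ψ t)) * dψ t ≤ 2*cv*t := by
      have h4 : 1/(2*Real.sqrt (ψ t)) * dψ t ≤ 1/(2*Real.sqrt (ψ t)) * (4*cv*t*Real.sqrt (ψ t)) :=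
        mul_le_mul_of_nonneg_left d2 (by positivity)
      have h5 : 1/(2*Real.sqrt (ψ t)) * (4*cv*t*Real.sqrt (ψ t)) = 2*cv*t := by
        field_simp
        ring
      linarith
    linarith [d3]
  have hηanti : AntitoneOn η (Ici t₀) := by
    apply antitoneOn_of_deriv_nonpos (convex_Ici t₀)
    · exact fun t ht => (hηd t ht).continuousAt.continuousWithinAt
    · intro t ht
      rw [interior_Ici] at ht
      exact (hηd t (le_of_lt ht)).differentiableAt.differentiableWithinAt
    · intro t ht
      rw [interior_Ici] at ht
      rw [(hηd t (le_of_lt ht)).deriv]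
      exact hηkey t (le_of_lt ht)
  set cu : ℝ := Real.sqrt (ψ t₀)/(t₀*t₀) + cv with hcu_def
  have hcu0 : 0 ≤ cu := by
    rw [hcu_def]
    have := Real.sqrt_nonneg (ψ t₀)
    have : (0:ℝ) < t₀*t₀ := by positivity
    positivity
  have hub : ∀ t ≥ t₀, ‖x t - xstar‖ ≤ cu := by
    intro t ht
    have htp : (0:ℝ) < t := hts t ht
    have h1 : η t ≤ η t₀ := hηanti self_mem_Ici ht ht
    simp only [hη_def] at h1
    have h2 : t*t*‖x t - xstar‖ ≤ Real.sqrt (ψ t₀) + cv*(t*t) := by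
      have := htu t ht
      nlinarith [Real.sqrt_nonneg (ψ t₀), sq_nonneg t₀, mul_pos ht₀ ht₀]
    have h3 : ‖x t - xstar‖ ≤ Real.sqrt (ψ t₀)/(t*t) + cv := by
      rw [div_add' _ _ _ (by positivity : (t*t) ≠ 0)]
      rw [le_div_iff₀ (by positivity : (0:ℝ) < t*t)]
      nlinarith [h2]
    have h4 : Real.sqrt (ψ t₀)/(t*t) ≤ Real.sqrt (ψ t₀)/(t₀*t₀) := by
      apply div_le_div_of_nonneg_left (Real.sqrt_nonneg _) (by positivity)
      nlinarith [ht₀]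
    rw [hcu_def]; linarith
  refine ⟨⟨cu + ‖xstar‖ + 1, by positivity, fun t ht => ?_⟩,
    ⟨2*cv + 2*cu + 1, by positivity, t₀, le_rfl, fun t ht => ?_⟩,
    ⟨G t₀ + 1, by linarith, t₀, le_rfl, fun t ht => ?_⟩⟩
  · -- boundedness of x
    have h1 : ‖x t‖ ≤ ‖x t - xstar‖ + ‖xstar‖ := by
      calc ‖x t‖ = ‖(x t - xstar) + xstar‖ := by rw [sub_add_cancel]
        _ ≤ ‖x t - xstar‖ + ‖xstar‖ := norm_add_le _ _
    linarith [hub t ht]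
  · -- velocity bound
    have htp : (0:ℝ) < t := hts t ht
    rw [Real.rpow_one, abs_of_nonneg (norm_nonneg _)]
    have h1 : (t/2) • x' t = v t - (x t - xstar) := by simp [hv_def]
    have h2 : ‖(t/2) • x' t‖ ≤ cv + cu := by
      rw [h1]
      calc ‖v t - (x t - xstar)‖ ≤ ‖v t‖ + ‖x t - xstar‖ := norm_sub_le _ _
        _ ≤ cv + cu := add_le_add (hvb t ht) (hub t ht)
    rw [norm_smul, Real.norm_of_nonneg (by positivity : (0:ℝ) ≤ t/2)] at h2
    rw [le_div_iff₀ htp]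
    clear_value cv cu
    nlinarith [h2, norm_nonneg (x' t)]
  · -- function value rate
    have htp : (0:ℝ) < t := hts t ht
    have hs0 : 0 ≤ g (x t) - g xstar := by linarith [hxstar (x t)]
    have h2t : t ^ ((2:ℝ)) = t*t := by
      rw [show ((2:ℝ)) = ((2:ℕ):ℝ) by norm_num, Real.rpow_natCast]
      ring
    rw [abs_of_nonneg hs0, h2t, le_div_iff₀ (by positivity)]
    have := (hFnn t ht).2.1
    have := hFb t ht
    nlinarith
end

section
/- Assume 0 < q < 1, α > 0, q + 1 < p ≤ 2, with the additional hypothesis a ≥ q(1−q) in case p = 2. Then for every x* ∈ argmin g, the limit lim_{t→∞} ‖x(t) − x*‖ exists (i.e. the function t ↦ ‖x(t) − x*‖ converges to some real number as t → ∞). -/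
set_option maxHeartbeats 1600000

open Filter Topology Set MeasureTheory RealInnerProductSpace

section St9Aux

variable {H : Type*} [NormedAddCommGroup H] [InnerProductSpace ℝ H]

lemma st9_tendsto_of_monotoneOn {f : ℝ → ℝ} {T M : ℝ}
    (hmono : MonotoneOn f (Ici T)) (hbdd : ∀ t, T ≤ t → f t ≤ M) :
    ∃ L : ℝ, Tendsto f atTop (𝓝 L) := by
  set g : ℝ → ℝ := fun t => f (max t T) with hg
  have hmg : Monotone g := fun s t hst =>
    hmono (le_max_right s T) (le_max_right t T) (max_le_max hst le_rfl)
  have hbg : BddAbove (range g) := ⟨M, by rintro _ ⟨t, rfl⟩; exact hbdd _ (le_max_right _ _)⟩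
  refine ⟨⨆ t, g t, Tendsto.congr' ?_ (tendsto_atTop_ciSup hmg hbg)⟩
  filter_upwards [eventually_ge_atTop T] with t ht
  simp [hg, max_eq_left ht]

lemma st9_tendsto_of_antitoneOn {f : ℝ → ℝ} {T M : ℝ}
    (hanti : AntitoneOn f (Ici T)) (hbdd : ∀ t, T ≤ t → M ≤ f t) :
    ∃ L : ℝ, Tendsto f atTop (𝓝 L) := by
  obtain ⟨L, hL⟩ := st9_tendsto_of_monotoneOn (f := fun t => -f t) (M := -M)
    (fun s hs t ht hst => neg_le_neg (hanti hs ht hst)) (fun t ht => neg_le_neg (hbdd t ht))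
  exact ⟨-L, by simpa using hL.neg⟩

lemma st9_grad_ineq [CompleteSpace H] {g : H → ℝ} {g' : H → H}
    (hg_convex : ConvexOn ℝ Set.univ g)
    (hg_grad : ∀ y : H, HasGradientAt g (g' y) y) (u v : H) :
    g u + ⟪g' u, v - u⟫ ≤ g v := by
  have hψ : ∀ s : ℝ, HasDerivAt (fun s : ℝ => u + s • (v - u)) (v - u) s := by
    intro s
    simpa using ((hasDerivAt_id s).smul_const (v - u)).const_add u
  have hφ : HasDerivAt (fun s : ℝ => g (u + s • (v - u))) ⟪g' u, v - u⟫ 0 := by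
    have h1 := (hg_grad (u + (0:ℝ) • (v - u))).hasFDerivAt.comp_hasDerivAt 0 (hψ 0)
    simpa [Function.comp_def] using h1
  have hslope : ∀ s : ℝ, s ∈ Ioo (0:ℝ) 1 →
      (g (u + s • (v - u)) - g u) / s ≤ g v - g u := by
    intro s hs
    have hc := hg_convex.2 (mem_univ u) (mem_univ v) (by linarith [hs.1, hs.2] : (0:ℝ) ≤ 1 - s)
      (le_of_lt hs.1) (by ring)
    have he : (1 - s) • u + s • v = u + s • (v - u) := by
      simp [smul_sub, sub_smul]; abel
    rw [he] at hc
    simp only [smul_eq_mul] at hc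
    rw [div_le_iff₀ hs.1]
    nlinarith [hc]
  have hd := hφ.hasDerivWithinAt (s := Ioi (0:ℝ))
  rw [hasDerivWithinAt_iff_tendsto_slope] at hd
  have hset : Ioi (0:ℝ) \ {0} = Ioi (0:ℝ) := diff_singleton_eq_self (by simp)
  rw [hset] at hd
  have hle : ⟪g' u, v - u⟫ ≤ g v - g u := by
    refine le_of_tendsto hd ?_
    filter_upwards [Ioo_mem_nhdsGT_of_mem (by norm_num : (0:ℝ) ∈ Ico (0:ℝ) 1)] with s hs
    have h2 := hslope s hs
    rw [slope_def_field]
    simp only [smul_zero, add_zero, sub_zero, zero_smul]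
    exact h2
  linarith

lemma st9_anchor (u s : H) : 0 ≤ ⟪u, u - s⟫ + ⟪s, s⟫/4 := by
  have h0 : (0:ℝ) ≤ ⟪(u - s) + (2⁻¹:ℝ) • s, (u - s) + (2⁻¹:ℝ) • s⟫ := real_inner_self_nonneg
  have hx9 : ⟪u, u - s⟫ = ⟪u - s, u - s⟫ + ⟪s, u - s⟫ := by
    rw [← inner_add_left]; congr 1; abel
  simp only [inner_add_left, inner_add_right, real_inner_smul_left, real_inner_smul_right] at h0
  rw [hx9]
  linarith [h0, real_inner_comm s (u - s)]

lemma st9_clamp_cont {f : ℝ → ℝ} {T : ℝ} (hf : ContinuousOn f (Ici T)) :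
    Continuous fun s => f (max s T) :=
  hf.comp_continuous (continuous_id.max continuous_const) fun s => mem_Ici.2 (le_max_right s T)

lemma st9_primitive {f : ℝ → ℝ} {T : ℝ} (hf : ContinuousOn f (Ici T)) (t : ℝ) :
    HasDerivAt (fun r => ∫ s in T..r, f (max s T)) (f (max t T)) t := by
  have hc := st9_clamp_cont hf
  exact intervalIntegral.integral_hasDerivAt_right (hc.intervalIntegrable _ _)
    (hc.stronglyMeasurableAtFilter _ _) hc.continuousAt

lemma st9_antitoneOn {f : ℝ → ℝ} {f' : ℝ → ℝ} {T : ℝ} (hc : ContinuousOn f (Ici T))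
    (hd : ∀ t, T < t → HasDerivAt f (f' t) t) (h0 : ∀ t, T < t → f' t ≤ 0) :
    AntitoneOn f (Ici T) := by
  refine antitoneOn_of_deriv_nonpos (convex_Ici T) hc ?_ ?_
  · rw [interior_Ici]; exact fun t ht => ((hd t ht).differentiableAt).differentiableWithinAt
  · rw [interior_Ici]; intro t ht; rw [(hd t ht).deriv]; exact h0 t ht

lemma st9_monotoneOn {f : ℝ → ℝ} {f' : ℝ → ℝ} {T : ℝ} (hc : ContinuousOn f (Ici T))
    (hd : ∀ t, T < t → HasDerivAt f (f' t) t) (h0 : ∀ t, T < t → 0 ≤ f' t) :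
    MonotoneOn f (Ici T) := by
  refine monotoneOn_of_deriv_nonneg (convex_Ici T) hc ?_ ?_
  · rw [interior_Ici]; exact fun t ht => ((hd t ht).differentiableAt).differentiableWithinAt
  · rw [interior_Ici]; intro t ht; rw [(hd t ht).deriv]; exact h0 t ht

lemma st9_ndd_ineq {g' : H → H} {xstar : H} {x x' x'' : ℝ → H} {α q a p t : ℝ}
    (ha0 : 0 < a) (ht : 0 < t)
    (hODEt : x'' t + (α / t ^ q) • x' t + g' (x t) + (a / t ^ p) • x t = 0)
    (hgX : 0 ≤ ⟪g' (x t), x t - xstar⟫) :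
    (⟪x t - xstar, x'' t⟫ + ⟪x' t, x' t⟫) + (⟪x' t, x' t⟫ + ⟪x'' t, x t - xstar⟫)
      + (α / t^q) * (⟪x t - xstar, x' t⟫ + ⟪x' t, x t - xstar⟫)
    ≤ 2*⟪x' t, x' t⟫ + (a*⟪xstar, xstar⟫/2) * t^(-p) := by
  have htq : (0:ℝ) < t ^ q := Real.rpow_pos_of_pos ht q
  have htp : (0:ℝ) < t ^ p := Real.rpow_pos_of_pos ht p
  have hxdd : x'' t = -((α / t ^ q) • x' t) - g' (x t) - (a / t ^ p) • x t := by
    rw [add_assoc, add_assoc] at hODEt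
    have h2 := add_eq_zero_iff_eq_neg.mp hODEt
    rw [h2]; abel
  have htnp : t^(-p) = (t^p)⁻¹ := Real.rpow_neg ht.le p
  have hanch := st9_anchor (x t) xstar
  have hP := mul_nonneg (div_nonneg ha0.le htp.le) hanch
  rw [hxdd, htnp]
  simp only [inner_sub_left, inner_sub_right, inner_neg_left, inner_neg_right,
    real_inner_smul_left, real_inner_smul_right,
    real_inner_comm (x' t) (x t), real_inner_comm (x' t) xstar,
    real_inner_comm (g' (x t)) (x t), real_inner_comm (g' (x t)) xstar,
    real_inner_comm (x t) xstar] at hP hgX ⊢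
  have hdivq : α / t ^ q * t ^ q = α := div_mul_cancel₀ α htq.ne'
  simp only [div_eq_mul_inv] at hP ⊢
  nlinarith [hP, hgX, htq, htp]

end St9Aux

namespace st9

variable {H : Type*} [NormedAddCommGroup H] [InnerProductSpace ℝ H] [CompleteSpace H]

noncomputable def En (g : H → ℝ) (xstar : H) (x x' : ℝ → H) (α q a p : ℝ) (t : ℝ) : ℝ :=
  t^(2*q) * (g (x t) - g xstar)
  + (1/2) * ⟪(2*α/3) • (x t - xstar) + t^q • x' t, (2*α/3) • (x t - xstar) + t^q • x' t⟫
  + ((α/3) * (α/3 - q * t^(q-1))) * ⟪x t - xstar, x t - xstar⟫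
  + (a/2) * t^(2*q-p) * ⟪x t, x t⟫

noncomputable def Ed (g : H → ℝ) (g' : H → H) (xstar : H) (x x' : ℝ → H) (α q a p : ℝ)
    (t : ℝ) : ℝ :=
  2*q*t^(2*q-1) * (g (x t) - g xstar)
  - (2*α/3) * t^q * ⟪g' (x t), x t - xstar⟫
  + (q*t^(q-1) - α/3) * t^q * ⟪x' t, x' t⟫
  + ((α/3) * q * (1-q) * t^(q-2)) * ⟪x t - xstar, x t - xstar⟫
  - a * (2*α/3) * t^(q-p) * ⟪x t, x t - xstar⟫
  + (a*(2*q-p)/2) * t^(2*q-p-1) * ⟪x t, x t⟫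

lemma hasDerivAt_En {g : H → ℝ} {g' : H → H} (hg_grad : ∀ y : H, HasGradientAt g (g' y) y)
    (xstar : H) {x x' x'' : ℝ → H} {α q a p t : ℝ} (ht : 0 < t)
    (hxt : HasDerivAt x (x' t) t) (hx't : HasDerivAt x' (x'' t) t)
    (hODEt : x'' t + (α / t ^ q) • x' t + g' (x t) + (a / t ^ p) • x t = 0) :
    HasDerivAt (En g xstar x x' α q a p) (Ed g g' xstar x x' α q a p t) t := by
  have htq : (0:ℝ) < t ^ q := Real.rpow_pos_of_pos ht q
  have htp : (0:ℝ) < t ^ p := Real.rpow_pos_of_pos ht p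
  have hX : HasDerivAt (fun s => x s - xstar) (x' t) t := hxt.sub_const _
  have hrq : HasDerivAt (fun s : ℝ => s ^ q) (q * t^(q-1)) t :=
    Real.hasDerivAt_rpow_const (Or.inl ht.ne')
  have hr2q : HasDerivAt (fun s : ℝ => s ^ (2*q)) ((2*q) * t^(2*q-1)) t :=
    Real.hasDerivAt_rpow_const (Or.inl ht.ne')
  have hr2qp : HasDerivAt (fun s : ℝ => s ^ (2*q-p)) ((2*q-p) * t^(2*q-p-1)) t :=
    Real.hasDerivAt_rpow_const (Or.inl ht.ne')
  have hrq1 : HasDerivAt (fun s : ℝ => s ^ (q-1)) ((q-1) * t^(q-2)) t := by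
    have := Real.hasDerivAt_rpow_const (x := t) (p := q-1) (Or.inl ht.ne')
    rwa [show q-1-1 = q-2 by ring] at this
  have hgc : HasDerivAt (fun s => g (x s)) ⟪g' (x t), x' t⟫ t := by
    have h1 := (hg_grad (x t)).hasFDerivAt.comp_hasDerivAt t hxt
    simpa [InnerProductSpace.toDual_apply_apply, Function.comp_def] using h1
  have hv : HasDerivAt (fun s => (2*α/3) • (x s - xstar) + s^q • x' s)
      ((2*α/3) • x' t + (t^q • x'' t + (q * t^(q-1)) • x' t)) t :=
    (hX.const_smul _).add (hrq.smul hx't)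
  have T1 : HasDerivAt (fun s => s^(2*q) * (g (x s) - g xstar))
      ((2*q) * t^(2*q-1) * (g (x t) - g xstar) + t^(2*q) * ⟪g' (x t), x' t⟫) t :=
    hr2q.mul (hgc.sub_const _)
  have T2 : HasDerivAt (fun s => (1/2) *
      ⟪(2*α/3) • (x s - xstar) + s^q • x' s, (2*α/3) • (x s - xstar) + s^q • x' s⟫)
      ((1/2) * (⟪(2*α/3) • (x t - xstar) + t^q • x' t,
          (2*α/3) • x' t + (t^q • x'' t + (q * t^(q-1)) • x' t)⟫
        + ⟪(2*α/3) • x' t + (t^q • x'' t + (q * t^(q-1)) • x' t),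
          (2*α/3) • (x t - xstar) + t^q • x' t⟫)) t :=
    (hv.inner ℝ hv).const_mul _
  have hxi : HasDerivAt (fun s : ℝ => (α/3) * (α/3 - q * s^(q-1)))
      ((α/3) * (-(q * ((q-1) * t^(q-2))))) t :=
    (((hrq1.const_mul q).const_sub (α/3)).const_mul (α/3))
  have T3 : HasDerivAt (fun s => ((α/3) * (α/3 - q * s^(q-1))) * ⟪x s - xstar, x s - xstar⟫)
      (((α/3) * (-(q * ((q-1) * t^(q-2))))) * ⟪x t - xstar, x t - xstar⟫
        + ((α/3) * (α/3 - q * t^(q-1))) * (⟪x t - xstar, x' t⟫ + ⟪x' t, x t - xstar⟫)) t :=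
    hxi.mul (hX.inner ℝ hX)
  have T4 : HasDerivAt (fun s => (a/2) * s^(2*q-p) * ⟪x s, x s⟫)
      ((a/2) * ((2*q-p) * t^(2*q-p-1)) * ⟪x t, x t⟫
        + (a/2) * t^(2*q-p) * (⟪x t, x' t⟫ + ⟪x' t, x t⟫)) t :=
    (hr2qp.const_mul (a/2)).mul (hxt.inner ℝ hxt)
  have hxdd : x'' t = -((α / t ^ q) • x' t) - g' (x t) - (a / t ^ p) • x t := by
    rw [add_assoc, add_assoc] at hODEt
    have := add_eq_zero_iff_eq_neg.mp hODEt
    rw [this]; abel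
  have Htot := ((T1.add T2).add T3).add T4
  unfold En
  have hEq : ((2*q) * t^(2*q-1) * (g (x t) - g xstar) + t^(2*q) * ⟪g' (x t), x' t⟫
      + (1/2) * (⟪(2*α/3) • (x t - xstar) + t^q • x' t,
          (2*α/3) • x' t + (t^q • x'' t + (q * t^(q-1)) • x' t)⟫
        + ⟪(2*α/3) • x' t + (t^q • x'' t + (q * t^(q-1)) • x' t),
          (2*α/3) • (x t - xstar) + t^q • x' t⟫)
      + (((α/3) * (-(q * ((q-1) * t^(q-2))))) * ⟪x t - xstar, x t - xstar⟫
        + ((α/3) * (α/3 - q * t^(q-1))) * (⟪x t - xstar, x' t⟫ + ⟪x' t, x t - xstar⟫))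
      + ((a/2) * ((2*q-p) * t^(2*q-p-1)) * ⟪x t, x t⟫
        + (a/2) * t^(2*q-p) * (⟪x t, x' t⟫ + ⟪x' t, x t⟫)))
      = Ed g g' xstar x x' α q a p t := by
    unfold Ed
    rw [hxdd]
    simp only [inner_add_left, inner_add_right, inner_sub_left, inner_sub_right,
      inner_neg_left, inner_neg_right, real_inner_smul_left, real_inner_smul_right,
      real_inner_comm (x' t) (x t), real_inner_comm (x' t) xstar,
      real_inner_comm (g' (x t)) (x t), real_inner_comm (g' (x t)) xstar,
      real_inner_comm (g' (x t)) (x' t), real_inner_comm (x t) xstar]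
    have e1 : t ^ (q-1) = t ^ q / t := by rw [Real.rpow_sub ht, Real.rpow_one]
    have e2 : t ^ (2*q) = t ^ q * t ^ q := by
      rw [show (2*q) = q + q by ring, Real.rpow_add ht]
    have e3 : t ^ (2*q-1) = t ^ q * t ^ q / t := by
      rw [Real.rpow_sub ht, Real.rpow_one, e2]
    have et2 : t ^ (2:ℝ) = t * t := by
      rw [show (2:ℝ) = ((2:ℕ):ℝ) by norm_num, Real.rpow_natCast]; ring
    have e4 : t ^ (q-2) = t ^ q / (t*t) := by rw [Real.rpow_sub ht, et2]
    have e5 : t ^ (q-p) = t ^ q / t ^ p := by rw [Real.rpow_sub ht]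
    have e6 : t ^ (2*q-p) = t ^ q * t ^ q / t ^ p := by rw [Real.rpow_sub ht, e2]
    have e7 : t ^ (2*q-p-1) = t ^ q * t ^ q / (t ^ p * t) := by
      rw [Real.rpow_sub ht, Real.rpow_one, e6, div_div]
    rw [e1, e3, e2, e4, e5, e6, e7]
    field_simp
    ring
  rw [← hEq]
  exact Htot

lemma En_lower {g : H → ℝ} {xstar : H} {x x' : ℝ → H} {α q a p t : ℝ}
    (hα : 0 < α) (ha0 : 0 ≤ a) (ht : 0 < t)
    (hsm : q * t^(q-1) ≤ α/6) (hgg : 0 ≤ g (x t) - g xstar) :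
    (α^2/18) * ⟪x t - xstar, x t - xstar⟫ ≤ En g xstar x x' α q a p t := by
  unfold En
  have h1 : (0:ℝ) < t^(2*q) := Real.rpow_pos_of_pos ht _
  have h2 : (0:ℝ) < t^(2*q-p) := Real.rpow_pos_of_pos ht _
  have h3 : (0:ℝ) ≤ ⟪(2*α/3) • (x t - xstar) + t^q • x' t,
      (2*α/3) • (x t - xstar) + t^q • x' t⟫ := real_inner_self_nonneg
  have h4 : (0:ℝ) ≤ ⟪x t - xstar, x t - xstar⟫ := real_inner_self_nonneg
  have h5 : (0:ℝ) ≤ ⟪x t, x t⟫ := real_inner_self_nonneg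
  nlinarith [mul_nonneg h1.le hgg, mul_nonneg (mul_nonneg (by linarith : (0:ℝ) ≤ a/2) h2.le) h5,
    mul_le_mul_of_nonneg_right (by nlinarith : α^2/18 ≤ (α/3) * (α/3 - q * t^(q-1))) h4]

lemma Ed_le {g : H → ℝ} {g' : H → H} {xstar : H} {x x' : ℝ → H} {α q a p t E : ℝ}
    (hα : 0 < α) (hq0 : 0 < q) (hq1 : q < 1) (ha0 : 0 < a) (hqp : q + 1 < p) (ht : 0 < t)
    (hsm : q * t^(q-1) ≤ α/6)
    (hgx : g (x t) - g xstar ≤ ⟪g' (x t), x t - xstar⟫)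
    (hgg : 0 ≤ g (x t) - g xstar)
    (hE : (α^2/18) * ⟪x t - xstar, x t - xstar⟫ ≤ E) :
    Ed g g' xstar x x' α q a p t ≤ (6*q*(1-q)/α) * t^(q-2) * E
      - (α/6) * t^q * ⟪x' t, x' t⟫ + (a*α/6) * t^(q-p) * ⟪xstar, xstar⟫ := by
  unfold Ed
  have rF : t^(2*q-1) = t^(q-1) * t^q := by
    rw [← Real.rpow_add ht, show q-1+q = 2*q-1 by ring]
  rw [rF]
  set A := t^q with hA'
  set B := t^(q-1) with hB'
  set G := t^(q-2) with hG'
  set D := t^(q-p) with hD'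
  set Z := t^(2*q-p-1) with hZ'
  have hA : (0:ℝ) < A := Real.rpow_pos_of_pos ht _
  have hB : (0:ℝ) < B := Real.rpow_pos_of_pos ht _
  have hG : (0:ℝ) < G := Real.rpow_pos_of_pos ht _
  have hD : (0:ℝ) < D := Real.rpow_pos_of_pos ht _
  have hZ : (0:ℝ) < Z := Real.rpow_pos_of_pos ht _
  have hdd : (0:ℝ) ≤ ⟪x' t, x' t⟫ := real_inner_self_nonneg
  have hxx : (0:ℝ) ≤ ⟪x t - xstar, x t - xstar⟫ := real_inner_self_nonneg
  have hxx2 : (0:ℝ) ≤ ⟪x t, x t⟫ := real_inner_self_nonneg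
  have hanch := st9_anchor (x t) xstar
  have hc1 : (0:ℝ) ≤ (6*q*(1-q)/α)*G :=
    mul_nonneg (div_nonneg (by nlinarith) hα.le) hG.le
  have HH1 : (α/3)*q*(1-q)*G*⟪x t - xstar, x t - xstar⟫
      ≤ (6*q*(1-q)/α)*G*E := by
    have h1 := mul_le_mul_of_nonneg_left hE hc1
    have h2 : (6*q*(1-q)/α)*G*((α^2/18)*⟪x t - xstar, x t - xstar⟫)
        = (α/3)*q*(1-q)*G*⟪x t - xstar, x t - xstar⟫ := by
      field_simp; ring
    linarith [h1, h2.ge, h2.le]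
  have HH2 : (0:ℝ) ≤ (2*α/3)*A*(⟪g' (x t), x t - xstar⟫ - (g (x t) - g xstar)) := by
    apply mul_nonneg (by positivity); linarith
  have HH3 : (0:ℝ) ≤ 2*((α/6 - q*B)*(A*(g (x t) - g xstar)))
      + (α/3)*(A*(g (x t) - g xstar)) := by
    have := mul_nonneg (by linarith : (0:ℝ) ≤ α/6 - q*B) (mul_nonneg hA.le hgg)
    have := mul_nonneg (by linarith : (0:ℝ) ≤ α/3) (mul_nonneg hA.le hgg)
    nlinarith
  have HH4 : (0:ℝ) ≤ (α/6 - q*B)*(A*⟪x' t, x' t⟫) :=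
    mul_nonneg (by linarith) (mul_nonneg hA.le hdd)
  have HH5 : (0:ℝ) ≤ a*(2*α/3)*D*(⟪x t, x t - xstar⟫ + ⟪xstar, xstar⟫/4) := by
    apply mul_nonneg (by positivity); linarith
  have HH6 : (0:ℝ) ≤ (a*(p-2*q)/2)*Z*⟪x t, x t⟫ := by
    apply mul_nonneg (mul_nonneg (by nlinarith) hZ.le) hxx2
  linarith [HH1, HH2, HH3, HH4, HH5, HH6]

end st9
theorem stmt9
    {H : Type*} [NormedAddCommGroup H] [InnerProductSpace ℝ H] [CompleteSpace H]
    (g : H → ℝ) (g' : H → H)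
    (hg_convex : ConvexOn ℝ Set.univ g)
    (hg_grad : ∀ y : H, HasGradientAt g (g' y) y)
    (hg_lip : ∀ s : Set H, Bornology.IsBounded s → ∃ K : NNReal, LipschitzOnWith K g' s)
    (t₀ α q a p : ℝ) (ht₀ : 0 < t₀) (hα : 0 < α) (hq0 : 0 < q) (ha0 : 0 < a) (hp0 : 0 < p)
    (x x' x'' : ℝ → H)
    (hx : ∀ t ≥ t₀, HasDerivAt x (x' t) t)
    (hx' : ∀ t ≥ t₀, HasDerivAt x' (x'' t) t)
    (hx''c : ContinuousOn x'' (Set.Ici t₀))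
    (hODE : ∀ t ≥ t₀, x'' t + (α / t ^ q) • x' t + g' (x t) + (a / t ^ p) • x t = 0)
    (hq1 : q < 1) (hqp : q + 1 < p) (hp2 : p ≤ 2) (hpa : p = 2 → a ≥ q * (1 - q))
    (xstar : H) (hxstar : ∀ y : H, g xstar ≤ g y) :
    ∃ L : ℝ, Filter.Tendsto (fun t => ‖x t - xstar‖) Filter.atTop (nhds L) := by
  classical
  have hq1' : (0:ℝ) < 1 - q := by linarith
  have hpq1 : (0:ℝ) < p - q - 1 := by linarith
  have hss0 : (0:ℝ) ≤ ⟪xstar, xstar⟫ := real_inner_self_nonneg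
  -- continuity of x and x'
  have hxc : ContinuousOn x (Ici t₀) := fun t ht => ((hx t ht).continuousAt).continuousWithinAt
  have hx'c : ContinuousOn x' (Ici t₀) := fun t ht => ((hx' t ht).continuousAt).continuousWithinAt
  -- gradient inequalities
  have hgg : ∀ t : ℝ, 0 ≤ g (x t) - g xstar := fun t => sub_nonneg.2 (hxstar (x t))
  have hgX : ∀ t : ℝ, g (x t) - g xstar ≤ ⟪g' (x t), x t - xstar⟫ := by
    intro t
    have h := st9_grad_ineq hg_convex hg_grad (x t) xstar
    rw [show xstar - x t = -(x t - xstar) by abel, inner_neg_right] at h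
    linarith
  have hgX0 : ∀ t : ℝ, 0 ≤ ⟪g' (x t), x t - xstar⟫ := fun t => le_trans (hgg t) (hgX t)
  -- select T
  obtain ⟨T₁, hT₁⟩ : ∃ T₁ : ℝ, ∀ t ≥ T₁, q * t ^ (q-1) ≤ α/6 := by
    have h1 := (tendsto_rpow_neg_atTop hq1').const_mul q
    rw [mul_zero] at h1
    have h1' : Tendsto (fun t : ℝ => q * t ^ (q-1)) atTop (𝓝 0) := by
      simpa [show -(1-q) = q - 1 by ring] using h1
    have h2 : ∀ᶠ t in atTop, q * t ^ (q-1) ≤ α/6 :=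
      h1'.eventually (eventually_le_nhds (by positivity))
    exact eventually_atTop.1 h2
  set T : ℝ := max (max t₀ 1) T₁ with hTdef
  have hTt₀ : t₀ ≤ T := le_trans (le_max_left _ _) (le_max_left _ _)
  have hT1 : (1:ℝ) ≤ T := le_trans (le_max_right t₀ 1) (le_max_left _ _)
  have hT0 : (0:ℝ) < T := lt_of_lt_of_le one_pos hT1
  have hTsm : ∀ t, T ≤ t → q * t ^ (q-1) ≤ α/6 := fun t ht =>
    hT₁ t (le_trans (le_max_right _ _) ht)
  have hpos : ∀ t, T ≤ t → (0:ℝ) < t := fun t ht => lt_of_lt_of_le hT0 ht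
  have ht₀le : ∀ t, T ≤ t → t₀ ≤ t := fun t ht => le_trans hTt₀ ht
  -- energy
  set EE : ℝ → ℝ := st9.En g xstar x x' α q a p with hEEdef
  set DD : ℝ → ℝ := st9.Ed g g' xstar x x' α q a p with hDDdef
  have hEd : ∀ t, T ≤ t → HasDerivAt EE (DD t) t := fun t ht =>
    st9.hasDerivAt_En hg_grad xstar (hpos t ht) (hx t (ht₀le t ht)) (hx' t (ht₀le t ht))
      (hODE t (ht₀le t ht))
  have hEnc : ContinuousOn EE (Ici T) := fun t ht => (hEd t ht).continuousAt.continuousWithinAt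
  have hEnlow : ∀ t, T ≤ t → (α^2/18) * ⟪x t - xstar, x t - xstar⟫ ≤ EE t := fun t ht =>
    st9.En_lower hα ha0.le (hpos t ht) (hTsm t ht) (hgg t)
  have hEn0 : ∀ t, T ≤ t → 0 ≤ EE t := fun t ht =>
    le_trans (mul_nonneg (by positivity) real_inner_self_nonneg) (hEnlow t ht)
  have hEdle : ∀ t, T ≤ t → DD t ≤ (6*q*(1-q)/α) * t^(q-2) * EE t
      - (α/6) * t^q * ⟪x' t, x' t⟫ + (a*α/6) * t^(q-p) * ⟪xstar, xstar⟫ := fun t ht =>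
    st9.Ed_le hα hq0 hq1 ha0 hqp (hpos t ht) (hTsm t ht) (hgX t) (hgg t) (hEnlow t ht)
  -- the function B (integrated Gronwall factor)
  set Bf : ℝ → ℝ := fun t => (6*q/α) * (T^(q-1) - t^(q-1)) with hBdef
  have hBd : ∀ t, 0 < t → HasDerivAt Bf ((6*q*(1-q)/α) * t^(q-2)) t := by
    intro t ht
    have h1 : HasDerivAt (fun s : ℝ => s ^ (q-1)) ((q-1) * t^(q-2)) t := by
      have := Real.hasDerivAt_rpow_const (x := t) (p := q-1) (Or.inl ht.ne')
      rwa [show q-1-1 = q-2 by ring] at this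
    have h2 := (h1.const_sub (T^(q-1))).const_mul (6*q/α)
    refine h2.congr_deriv ?_
    ring
  have hB0 : ∀ t, T ≤ t → 0 ≤ Bf t := by
    intro t ht
    have h1 := Real.rpow_le_rpow_of_nonpos hT0 ht (show q-1 ≤ 0 by linarith)
    have h2 : (0:ℝ) ≤ 6*q/α := by positivity
    simp only [hBdef]
    nlinarith
  have hBbd : ∀ t, T ≤ t → Bf t ≤ (6*q/α) * T^(q-1) := by
    intro t ht
    have h1 : (0:ℝ) ≤ t^(q-1) := (Real.rpow_pos_of_pos (hpos t ht) _).le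
    have h2 : (0:ℝ) ≤ 6*q/α := by positivity
    simp only [hBdef]
    nlinarith
  set Bmax : ℝ := (6*q/α) * T^(q-1) with hBmaxdef
  have hBT : Bf T = 0 := by simp [hBdef]
  -- the function CF (primitive of t^(q-p)) and W0
  set CF : ℝ → ℝ := fun t => (T^(q+1-p) - t^(q+1-p))/(p-q-1) with hCFdef
  have hCFd : ∀ t, 0 < t → HasDerivAt CF (t^(q-p)) t := by
    intro t ht
    have h1 : HasDerivAt (fun s : ℝ => s ^ (q+1-p)) ((q+1-p) * t^(q-p)) t := by
      have := Real.hasDerivAt_rpow_const (x := t) (p := q+1-p) (Or.inl ht.ne')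
      rwa [show q+1-p-1 = q-p by ring] at this
    have h2 := (h1.const_sub (T^(q+1-p))).div_const (p-q-1)
    refine h2.congr_deriv ?_
    rw [div_eq_iff hpq1.ne']
    ring
  have hCF0 : ∀ t, T ≤ t → 0 ≤ CF t := by
    intro t ht
    have h1 := Real.rpow_le_rpow_of_nonpos hT0 ht (show q+1-p ≤ 0 by linarith)
    simp only [hCFdef]
    exact div_nonneg (by linarith) hpq1.le
  have hCFbd : ∀ t, T ≤ t → CF t ≤ T^(q+1-p)/(p-q-1) := by
    intro t ht
    have h1 : (0:ℝ) ≤ t^(q+1-p) := (Real.rpow_pos_of_pos (hpos t ht) _).le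
    simp only [hCFdef]
    exact (div_le_div_iff_of_pos_right hpq1).mpr (sub_le_self _ h1)
  have hCFT : CF T = 0 := by simp [hCFdef]
  set css : ℝ := (a*α/6) * ⟪xstar, xstar⟫ with hcssdef
  have hcss0 : 0 ≤ css := by
    apply mul_nonneg (by positivity) hss0
  set W0 : ℝ → ℝ := fun t => css * CF t with hW0def
  have hW0d : ∀ t, 0 < t → HasDerivAt W0 (css * t^(q-p)) t := fun t ht =>
    (hCFd t ht).const_mul css
  have hW00 : ∀ t, T ≤ t → 0 ≤ W0 t := fun t ht => mul_nonneg hcss0 (hCF0 t ht)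
  set W0max : ℝ := css * (T^(q+1-p)/(p-q-1)) with hW0maxdef
  have hW0bd : ∀ t, T ≤ t → W0 t ≤ W0max := fun t ht =>
    mul_le_mul_of_nonneg_left (hCFbd t ht) hcss0
  have hW0T : W0 T = 0 := by simp [hW0def, hCFT]
  -- Aint
  set AF : ℝ → ℝ := fun s => (α/6) * s^q * ⟪x' s, x' s⟫ * Real.exp (-(Bf s)) with hAFdef
  have hrqc : ContinuousOn (fun s : ℝ => s ^ q) (Ici T) := fun t ht =>
    (Real.continuousAt_rpow_const t q (Or.inl (hpos t ht).ne')).continuousWithinAt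
  have hx'T : ContinuousOn x' (Ici T) := hx'c.mono (Ici_subset_Ici.2 hTt₀)
  have hddc : ContinuousOn (fun s : ℝ => ⟪x' s, x' s⟫) (Ici T) := hx'T.inner hx'T
  have hBc : ContinuousOn Bf (Ici T) := fun t ht =>
    (hBd t (hpos t ht)).continuousAt.continuousWithinAt
  have hexpBc : ContinuousOn (fun s => Real.exp (-(Bf s))) (Ici T) :=
    Real.continuous_exp.comp_continuousOn hBc.neg
  have hAFc : ContinuousOn AF (Ici T) :=
    ((continuousOn_const.mul hrqc).mul hddc).mul hexpBc
  set Aint : ℝ → ℝ := fun r => ∫ s in T..r, AF (max s T) with hAintdef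
  have hAd : ∀ t, HasDerivAt Aint (AF (max t T)) t := st9_primitive hAFc
  have hAd' : ∀ t, T ≤ t → HasDerivAt Aint (AF t) t := fun t ht => by
    have := hAd t
    rwa [max_eq_left ht] at this
  have hAF0 : ∀ s : ℝ, 0 ≤ AF (max s T) := by
    intro s
    have h1 : (0:ℝ) < max s T := lt_of_lt_of_le hT0 (le_max_right _ _)
    have h2 : (0:ℝ) ≤ (max s T)^q := (Real.rpow_pos_of_pos h1 q).le
    simp only [hAFdef]
    have h3 : (0:ℝ) ≤ ⟪x' (max s T), x' (max s T)⟫ := real_inner_self_nonneg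
    positivity
  have hAmono : Monotone Aint :=
    monotone_of_deriv_nonneg (fun t => (hAd t).differentiableAt)
      (fun t => by rw [(hAd t).deriv]; exact hAF0 t)
  have hAT : Aint T = 0 := by simp [hAintdef]
  have hA0 : ∀ t, T ≤ t → 0 ≤ Aint t := fun t ht => hAT ▸ hAmono ht
  have hAc : Continuous Aint := continuous_iff_continuousAt.2 fun t => (hAd t).continuousAt
  -- Φ and the Gronwall bound
  set Φ : ℝ → ℝ := fun t => EE t * Real.exp (-(Bf t)) + Aint t - W0 t with hΦdef
  have hΦanti : AntitoneOn Φ (Ici T) := by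
    apply st9_antitoneOn (f' := fun t => (DD t * Real.exp (-(Bf t))
      + EE t * (Real.exp (-(Bf t)) * -((6*q*(1-q)/α) * t^(q-2)))) + AF t - css * t^(q-p))
    · exact ((hEnc.mul hexpBc).add hAc.continuousOn).sub
        (fun t ht => (hW0d t (hpos t ht)).continuousAt.continuousWithinAt)
    · intro t ht
      have h1 := ((hEd t ht.le).mul ((hBd t (hpos t ht.le)).neg.exp)).add (hAd' t ht.le)
      exact (h1.sub (hW0d t (hpos t ht.le)))
    · intro t ht
      have he1 : Real.exp (-(Bf t)) ≤ 1 :=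
        Real.exp_le_one_iff.2 (neg_nonpos.2 (hB0 t ht.le))
      have he0 : (0:ℝ) < Real.exp (-(Bf t)) := Real.exp_pos _
      have hw0nn : 0 ≤ css * t^(q-p) :=
        mul_nonneg hcss0 (Real.rpow_pos_of_pos (hpos t ht.le) _).le
      have hmul := mul_le_mul_of_nonneg_right (hEdle t ht.le) he0.le
      have hAFt : AF t = (α/6) * t^q * ⟪x' t, x' t⟫ * Real.exp (-(Bf t)) := rfl
      have hcsst : (a*α/6) * t^(q-p) * ⟪xstar, xstar⟫ = css * t^(q-p) := by
        rw [hcssdef]; ring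
      rw [hcsst] at hmul
      nlinarith [hmul, hw0nn, he1]
  have hΦT : Φ T = EE T := by
    simp [hΦdef, hBT, hAT, hW0T]
  have hΦle : ∀ t, T ≤ t → Φ t ≤ EE T := fun t ht =>
    le_of_le_of_eq (hΦanti self_mem_Ici ht ht) hΦT
  set M1 : ℝ := (EE T + W0max) * Real.exp Bmax with hM1def
  have hETW : 0 ≤ EE T + W0max := by
    have := hEn0 T le_rfl
    have := hW0bd T le_rfl
    have := hW00 T le_rfl
    linarith
  have hEnbd : ∀ t, T ≤ t → EE t ≤ M1 := by
    intro t ht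
    have h1 : EE t * Real.exp (-(Bf t)) ≤ EE T + W0max := by
      have := hΦle t ht
      have := hA0 t ht
      have := hW0bd t ht
      simp only [hΦdef] at *
      linarith
    have h2 : EE t = EE t * Real.exp (-(Bf t)) * Real.exp (Bf t) := by
      rw [mul_assoc, ← Real.exp_add]
      simp
    rw [h2]
    calc EE t * Real.exp (-(Bf t)) * Real.exp (Bf t)
        ≤ (EE T + W0max) * Real.exp (Bf t) :=
          mul_le_mul_of_nonneg_right h1 (Real.exp_pos _).le
      _ ≤ (EE T + W0max) * Real.exp Bmax :=
          mul_le_mul_of_nonneg_left (Real.exp_le_exp.2 (hBbd t ht)) hETW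
  have hAbd : ∀ t, T ≤ t → Aint t ≤ EE T + W0max := by
    intro t ht
    have h1 := hΦle t ht
    have h2 : 0 ≤ EE t * Real.exp (-(Bf t)) :=
      mul_nonneg (hEn0 t ht) (Real.exp_pos _).le
    have h3 := hW0bd t ht
    simp only [hΦdef] at h1
    linarith
  -- ====== stage E : the distance function ======
  set Γ : ℝ → ℝ := fun t => Real.exp ((α/(1-q)) * (t^(1-q) - T^(1-q))) with hΓdef
  have hΓpos : ∀ t : ℝ, 0 < Γ t := fun t => Real.exp_pos _
  have hΓd : ∀ t, 0 < t → HasDerivAt Γ ((α / t^q) * Γ t) t := by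
    intro t ht
    have h2 : HasDerivAt (fun s : ℝ => s ^ (1-q)) ((1-q) * t^(-q)) t := by
      have := Real.hasDerivAt_rpow_const (x := t) (p := 1-q) (Or.inl ht.ne')
      rwa [show 1-q-1 = -q by ring] at this
    have h3 := ((h2.sub_const (T^(1-q))).const_mul (α/(1-q))).exp
    have h4 : t^(-q) = (t^q)⁻¹ := Real.rpow_neg ht.le q
    have h5 : t^q ≠ 0 := (Real.rpow_pos_of_pos ht q).ne'
    have h8 : Γ t = Real.exp (α/(1-q) * (t^(1-q) - T^(1-q))) := rfl
    convert h3 using 1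
    rw [← h8, mul_comm ((α / t^q)) (Γ t)]
    congr 1
    rw [h4]
    field_simp
  have hΓT : Γ T = 1 := by simp [hΓdef]
  have hΓ1 : ∀ t, T ≤ t → 1 ≤ Γ t := by
    intro t ht
    have h1 : T^(1-q) ≤ t^(1-q) := Real.rpow_le_rpow hT0.le ht (by linarith)
    have h2 : 0 ≤ (α/(1-q)) * (t^(1-q) - T^(1-q)) :=
      mul_nonneg (by positivity) (by linarith)
    simpa [hΓdef] using Real.one_le_exp h2
  have hΓc : ContinuousOn Γ (Ici T) := fun t ht =>
    (hΓd t (hpos t ht)).continuousAt.continuousWithinAt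
  -- n and its derivatives
  set nfun : ℝ → ℝ := fun t => ⟪x t - xstar, x t - xstar⟫ with hnfundef
  set nd : ℝ → ℝ := fun t => ⟪x t - xstar, x' t⟫ + ⟪x' t, x t - xstar⟫ with hnddef
  set ndd : ℝ → ℝ := fun t => (⟪x t - xstar, x'' t⟫ + ⟪x' t, x' t⟫)
    + (⟪x' t, x' t⟫ + ⟪x'' t, x t - xstar⟫) with hndddef
  have hXd : ∀ t, t₀ ≤ t → HasDerivAt (fun s => x s - xstar) (x' t) t := fun t ht =>
    (hx t ht).sub_const _
  have hndAt : ∀ t, t₀ ≤ t → HasDerivAt nfun (nd t) t := fun t ht =>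
    (hXd t ht).inner ℝ (hXd t ht)
  have hnddAt : ∀ t, t₀ ≤ t → HasDerivAt nd (ndd t) t := fun t ht =>
    ((hXd t ht).inner ℝ (hx' t ht)).add ((hx' t ht).inner ℝ (hXd t ht))
  have hndc : ContinuousOn nd (Ici T) := fun t ht =>
    (hnddAt t (ht₀le t ht)).continuousAt.continuousWithinAt
  have hnc : ContinuousOn nfun (Ici T) := fun t ht =>
    (hndAt t (ht₀le t ht)).continuousAt.continuousWithinAt
  -- w
  set w : ℝ → ℝ := fun t => 2*⟪x' t, x' t⟫ + (a*⟪xstar, xstar⟫/2) * t^(-p) with hwdef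
  have hwc : ContinuousOn w (Ici T) := by
    apply (hddc.const_smul (2:ℝ)).add
    exact continuousOn_const.mul (fun t ht =>
      (Real.continuousAt_rpow_const t (-p) (Or.inl (hpos t ht).ne')).continuousWithinAt)
  have hw0 : ∀ t, T ≤ t → 0 ≤ w t := by
    intro t ht
    have h1 : (0:ℝ) ≤ t^(-p) := (Real.rpow_pos_of_pos (hpos t ht) _).le
    have h2 : (0:ℝ) ≤ ⟪x' t, x' t⟫ := real_inner_self_nonneg
    simp only [hwdef]
    positivity
  have hwle : ∀ t, T ≤ t → ndd t + (α/t^q) * nd t ≤ w t := fun t ht =>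
    st9_ndd_ineq ha0 (hpos t ht) (hODE t (ht₀le t ht)) (hgX0 t)
  -- W
  set Wgd : ℝ → ℝ := fun s => Γ s * w s with hWgddef
  have hWgdc : ContinuousOn Wgd (Ici T) := hΓc.mul hwc
  set Wfun : ℝ → ℝ := fun r => ∫ s in T..r, Wgd (max s T) with hWdef
  have hWd : ∀ t, HasDerivAt Wfun (Wgd (max t T)) t := st9_primitive hWgdc
  have hWd' : ∀ t, T ≤ t → HasDerivAt Wfun (Γ t * w t) t := fun t ht => by
    have := hWd t; rwa [max_eq_left ht] at this
  have hWgd0 : ∀ s : ℝ, 0 ≤ Wgd (max s T) :=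
    fun s => mul_nonneg (hΓpos _).le (hw0 _ (le_max_right _ _))
  have hWmono : Monotone Wfun :=
    monotone_of_deriv_nonneg (fun t => (hWd t).differentiableAt)
      (fun t => by rw [(hWd t).deriv]; exact hWgd0 t)
  have hWT : Wfun T = 0 := by simp [hWdef]
  have hWnn : ∀ t, T ≤ t → 0 ≤ Wfun t := fun t ht => hWT ▸ hWmono ht
  have hWc : Continuous Wfun := continuous_iff_continuousAt.2 fun t => (hWd t).continuousAt
  -- z
  set z : ℝ → ℝ := fun t => Γ t * nd t - Wfun t with hzdef
  have hzanti : AntitoneOn z (Ici T) := by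
    apply st9_antitoneOn (f' := fun t => ((α / t^q) * Γ t * nd t + Γ t * ndd t) - Γ t * w t)
    · exact (hΓc.mul hndc).sub hWc.continuousOn
    · intro t ht
      exact ((hΓd t (hpos t ht.le)).mul (hnddAt t (ht₀le t ht.le))).sub (hWd' t ht.le)
    · intro t ht
      have h5 : Γ t * (ndd t + (α/t^q)*nd t - w t) ≤ 0 :=
        mul_nonpos_of_nonneg_of_nonpos (hΓpos t).le (by linarith [hwle t ht.le])
      nlinarith [h5]
  have hzle : ∀ t, T ≤ t → nd t ≤ (|nd T| + Wfun t)/Γ t := by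
    intro t ht
    have h1 : z t ≤ z T := hzanti self_mem_Ici ht ht
    have h2 : z T = nd T := by simp [hzdef, hΓT, hWT]
    rw [h2] at h1
    have h3 : Γ t * nd t ≤ |nd T| + Wfun t := by
      have := le_abs_self (nd T)
      simp only [hzdef] at h1
      linarith
    rw [le_div_iff₀ (hΓpos t)]
    linarith [h3, mul_comm (nd t) (Γ t)]
  -- u and U
  set c0 : ℝ := |nd T| with hc0def
  have hc00 : 0 ≤ c0 := abs_nonneg _
  set u : ℝ → ℝ := fun t => (c0 + Wfun t)/Γ t with hudef
  have hu0 : ∀ t, T ≤ t → 0 ≤ u t := fun t ht =>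
    div_nonneg (add_nonneg hc00 (hWnn t ht)) (hΓpos t).le
  have huc : ContinuousOn u (Ici T) :=
    (continuousOn_const.add hWc.continuousOn).div hΓc (fun t _ => (hΓpos t).ne')
  set Ufun : ℝ → ℝ := fun r => ∫ s in T..r, u (max s T) with hUdef
  have hUd : ∀ t, HasDerivAt Ufun (u (max t T)) t := st9_primitive huc
  have hUd' : ∀ t, T ≤ t → HasDerivAt Ufun (u t) t := fun t ht => by
    have := hUd t; rwa [max_eq_left ht] at this
  have hUmono : Monotone Ufun :=
    monotone_of_deriv_nonneg (fun t => (hUd t).differentiableAt)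
      (fun t => by rw [(hUd t).deriv]; exact hu0 _ (le_max_right _ _))
  have hUT : Ufun T = 0 := by simp [hUdef]
  have hUc : Continuous Ufun := continuous_iff_continuousAt.2 fun t => (hUd t).continuousAt
  -- SW
  set SWgd : ℝ → ℝ := fun s => s^q * w s with hSWgddef
  have hSWgdc : ContinuousOn SWgd (Ici T) := hrqc.mul hwc
  set SW : ℝ → ℝ := fun r => ∫ s in T..r, SWgd (max s T) with hSWdef
  have hSWd : ∀ t, HasDerivAt SW (SWgd (max t T)) t := st9_primitive hSWgdc
  have hSWd' : ∀ t, T ≤ t → HasDerivAt SW (t^q * w t) t := fun t ht => by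
    have := hSWd t; rwa [max_eq_left ht] at this
  have hSWT : SW T = 0 := by simp [hSWdef]
  have hSWc : Continuous SW := continuous_iff_continuousAt.2 fun t => (hSWd t).continuousAt
  -- K
  set K : ℝ → ℝ := fun t => Ufun t + (2/α) * (t^q / Γ t * (c0 + Wfun t)) - (2/α) * SW t
    with hKdef
  have hKanti : AntitoneOn K (Ici T) := by
    apply st9_antitoneOn (f' := fun t => u t
      + (2/α) * ((((q*t^(q-1)) * Γ t - t^q * ((α / t^q) * Γ t)) / (Γ t)^2) * (c0 + Wfun t)
        + (t^q / Γ t) * (Γ t * w t))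
      - (2/α) * (t^q * w t))
    · refine (hUc.continuousOn.add (continuousOn_const.mul
        ((hrqc.div hΓc (fun t _ => (hΓpos t).ne')).mul
          (continuousOn_const.add hWc.continuousOn)))).sub
        (continuousOn_const.mul hSWc.continuousOn)
    · intro t ht
      have ht' := hpos t ht.le
      have hrqd : HasDerivAt (fun s : ℝ => s ^ q) (q * t^(q-1)) t :=
        Real.hasDerivAt_rpow_const (Or.inl ht'.ne')
      have hdiv := hrqd.div (hΓd t ht') (hΓpos t).ne'
      have hprod := hdiv.mul ((hWd' t ht.le).const_add c0)
      exact ((hUd' t ht.le).add (hprod.const_mul (2/α))).sub ((hSWd' t ht.le).const_mul (2/α))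
    · intro t ht
      have ht' := hpos t ht.le
      have hq' : t^q ≠ 0 := (Real.rpow_pos_of_pos ht' q).ne'
      have hΓ' : Γ t ≠ 0 := (hΓpos t).ne'
      have heq : u t
          + (2/α) * ((((q*t^(q-1)) * Γ t - t^q * ((α / t^q) * Γ t)) / (Γ t)^2) * (c0 + Wfun t)
            + (t^q / Γ t) * (Γ t * w t))
          - (2/α) * (t^q * w t)
          = ((c0 + Wfun t)/Γ t) * ((2/α)*(q*t^(q-1)) - 1) := by
        simp only [hudef]
        field_simp
        ring
      rw [heq]
      apply mul_nonpos_of_nonneg_of_nonpos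
      · exact div_nonneg (add_nonneg hc00 (hWnn t ht.le)) (hΓpos t).le
      · have h1 := hTsm t ht.le
        have h2 : (2/α)*(q*t^(q-1)) ≤ (2/α)*(α/6) :=
          mul_le_mul_of_nonneg_left h1 (by positivity)
        have h3 : (2/α)*(α/6) = 1/3 := by field_simp; ring
        linarith [h2, h3.le, h3.ge]
  have hKT : K T = (2/α) * (T^q * c0) := by
    simp [hKdef, hUT, hSWT, hΓT, hWT]
  have hUbd1 : ∀ t, T ≤ t → Ufun t ≤ (2/α) * (T^q * c0) + (2/α) * SW t := by
    intro t ht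
    have h1 : K t ≤ K T := hKanti self_mem_Ici ht ht
    rw [hKT] at h1
    have h2 : 0 ≤ (2/α) * (t^q / Γ t * (c0 + Wfun t)) := by
      apply mul_nonneg (by positivity)
      apply mul_nonneg (div_nonneg (Real.rpow_pos_of_pos (hpos t ht) q).le (hΓpos t).le)
      exact add_nonneg hc00 (hWnn t ht)
    simp only [hKdef] at h1
    linarith
  -- R and the bound on SW
  set R : ℝ → ℝ := fun t => (12/α) * Real.exp Bmax * Aint t
    + (a*⟪xstar, xstar⟫/2) * CF t - SW t with hRdef
  have hRmono : MonotoneOn R (Ici T) := by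
    apply st9_monotoneOn (f' := fun t => (12/α) * Real.exp Bmax * AF t
      + (a*⟪xstar, xstar⟫/2) * t^(q-p) - t^q * w t)
    · exact ((continuous_const.mul hAc).continuousOn.add
        (continuousOn_const.mul (fun t ht =>
          (hCFd t (hpos t ht)).continuousAt.continuousWithinAt))).sub hSWc.continuousOn
    · intro t ht
      exact (((hAd' t ht.le).const_mul _).add ((hCFd t (hpos t ht.le)).const_mul _)).sub
        (hSWd' t ht.le)
    · intro t ht
      have ht' := hpos t ht.le
      have h7 : t^(q-p) = t^q * t^(-p) := by
        rw [show q - p = q + -p by ring, Real.rpow_add ht']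
      have h8 : 0 ≤ t^q * ⟪x' t, x' t⟫ :=
        mul_nonneg (Real.rpow_pos_of_pos ht' q).le real_inner_self_nonneg
      have h6 : 1 ≤ Real.exp Bmax * Real.exp (-(Bf t)) := by
        rw [← Real.exp_add]
        apply Real.one_le_exp
        linarith [hBbd t ht.le]
      have heq2 : (12/α) * Real.exp Bmax * AF t
          = 2 * (t^q * ⟪x' t, x' t⟫) * (Real.exp Bmax * Real.exp (-(Bf t))) := by
        simp only [hAFdef]
        field_simp
        ring
      have h9 : 0 ≤ (t^q * ⟪x' t, x' t⟫) * (Real.exp Bmax * Real.exp (-(Bf t)) - 1) :=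
        mul_nonneg h8 (by linarith)
      rw [heq2, h7]
      simp only [hwdef]
      linarith [h9]
  have hRT : R T = 0 := by simp [hRdef, hAT, hCFT, hSWT]
  have hSWbd : ∀ t, T ≤ t → SW t ≤ (12/α) * Real.exp Bmax * (EE T + W0max)
      + (a*⟪xstar, xstar⟫/2) * (T^(q+1-p)/(p-q-1)) := by
    intro t ht
    have h1 : R T ≤ R t := hRmono self_mem_Ici ht ht
    rw [hRT] at h1
    have h2 := hAbd t ht
    have h3 := hCFbd t ht
    have h4 : (0:ℝ) ≤ (12/α) * Real.exp Bmax := by positivity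
    have h5 : (0:ℝ) ≤ a*⟪xstar, xstar⟫/2 := by positivity
    simp only [hRdef] at h1
    nlinarith [mul_le_mul_of_nonneg_left h2 h4, mul_le_mul_of_nonneg_left h3 h5]
  -- U is bounded, hence converges
  set M4 : ℝ := (2/α) * (T^q * c0) + (2/α) * ((12/α) * Real.exp Bmax * (EE T + W0max)
      + (a*⟪xstar, xstar⟫/2) * (T^(q+1-p)/(p-q-1))) with hM4def
  have hUbd : ∀ t, T ≤ t → Ufun t ≤ M4 := by
    intro t ht
    have h1 := hUbd1 t ht
    have h2 := hSWbd t ht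
    have h3 : (0:ℝ) ≤ 2/α := by positivity
    simp only [hM4def]
    nlinarith [mul_le_mul_of_nonneg_left h2 h3]
  obtain ⟨L₁, hL₁⟩ := st9_tendsto_of_monotoneOn (hUmono.monotoneOn _) hUbd
  -- n - U converges
  have hψanti : AntitoneOn (fun t => nfun t - Ufun t) (Ici T) := by
    apply st9_antitoneOn (f' := fun t => nd t - u t)
    · exact hnc.sub hUc.continuousOn
    · intro t ht
      exact (hndAt t (ht₀le t ht.le)).sub (hUd' t ht.le)
    · intro t ht
      have h1 := hzle t ht.le
      simp only [hudef, hc0def]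
      linarith [h1]
  have hψbd : ∀ t, T ≤ t → -M4 ≤ nfun t - Ufun t := by
    intro t ht
    have h1 : 0 ≤ nfun t := real_inner_self_nonneg
    linarith [hUbd t ht]
  obtain ⟨L₂, hL₂⟩ := st9_tendsto_of_antitoneOn hψanti hψbd
  have hnlim : Tendsto nfun atTop (𝓝 (L₂ + L₁)) := by
    have h1 := hL₂.add hL₁
    simpa using h1
  refine ⟨Real.sqrt (L₂ + L₁), ?_⟩
  have hsq : Tendsto (fun t => Real.sqrt (nfun t)) atTop (𝓝 (Real.sqrt (L₂ + L₁))) :=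
    (Real.continuous_sqrt.tendsto _).comp hnlim
  refine hsq.congr fun t => ?_
  simp only [hnfundef]
  rw [real_inner_self_eq_norm_mul_norm, Real.sqrt_mul_self (norm_nonneg _)]
end
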